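/- arXiv:2408.09234 — 5 statements merged into one kernel-verified Lean document; each statement's English description precedes it below -/
import Mathlib

section
/- Let n, k be positive integers with n > 2k, and let ρ = (∏_{l=-k}^{k-1} (n+2l))^{-1/k}. Then the function B(y) = (1 + ρ|y|²)^{-(n-2k)/2} on ℝⁿ satisfies Δ^k B = B^{(n+2k)/(n-2k)} pointwise on ℝⁿ, where Δ = -∑ ∂ᵢ² is the (geometer's) Laplacian. -/
noncomputable section

open MeasureTheory Real

/-- The (geometer's, nonnegative) Euclidean Laplacian `Δ f = -∑ ∂ᵢ² f`. -/
def euclLap {n : ℕ} (f : EuclideanSpace ℝ (Fin n) → ℝ) (x : EuclideanSpace ℝ (Fin n)) : ℝ :=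
  -∑ i : Fin n,
    iteratedFDeriv ℝ 2 f x ![EuclideanSpace.single i 1, EuclideanSpace.single i 1]

/-- The constant `ρ_{n,k} = (∏_{l=-k}^{k-1} (n+2l))^{-1/k}`. -/
def rhoNK (n k : ℕ) : ℝ :=
  (∏ j ∈ Finset.range (2 * k), ((n : ℝ) + 2 * j - 2 * k)) ^ (-(1 : ℝ) / k)

/-- The standard Euclidean bubble `B(y) = (1 + ρ_{n,k}|y|²)^{-(n-2k)/2}`. -/
def bubble (n k : ℕ) (y : EuclideanSpace ℝ (Fin n)) : ℝ :=
  (1 + rhoNK n k * ‖y‖ ^ 2) ^ (-(((n : ℝ) - 2 * k) / 2))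

/-! ### Auxiliary analytic facts -/

/-- auxiliary power function -/
def fp (n : ℕ) (ρ : ℝ) (p : ℝ) (y : EuclideanSpace ℝ (Fin n)) : ℝ := (1 + ρ * ‖y‖ ^ 2) ^ p

variable {n : ℕ}

lemma base_pos {ρ : ℝ} (hρ : 0 < ρ) (y : EuclideanSpace ℝ (Fin n)) : 0 < 1 + ρ * ‖y‖ ^ 2 := by
  positivity

lemma fp_hasFDerivAt {ρ : ℝ} (hρ : 0 < ρ) (p : ℝ) (x : EuclideanSpace ℝ (Fin n)) :
    HasFDerivAt (fp n ρ p) ((ρ * p * fp n ρ (p - 1) x) • (2 • innerSL ℝ x)) x := by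
  have h1 : HasDerivAt (fun t : ℝ => 1 + ρ * t) ρ (‖x‖ ^ 2) := by
    simpa using ((hasDerivAt_id (‖x‖ ^ 2)).const_mul ρ).const_add 1
  have h2 : HasDerivAt (fun t : ℝ => t ^ p)
      (p * (1 + ρ * ‖x‖ ^ 2) ^ (p - 1)) (1 + ρ * ‖x‖ ^ 2) :=
    Real.hasDerivAt_rpow_const (Or.inl (base_pos hρ x).ne')
  have h3 : HasDerivAt (fun t : ℝ => (1 + ρ * t) ^ p)
      (p * (1 + ρ * ‖x‖ ^ 2) ^ (p - 1) * ρ) (‖x‖ ^ 2) := HasDerivAt.comp (h₂ := fun t : ℝ => t ^ p) (‖x‖ ^ 2) h2 h1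
  have h4 : HasFDerivAt (fun y : EuclideanSpace ℝ (Fin n) => ‖y‖ ^ 2)
      (2 • innerSL ℝ x) x := (hasStrictFDerivAt_norm_sq x).hasFDerivAt
  have h5 := h3.comp_hasFDerivAt x h4
  have : (p * (1 + ρ * ‖x‖ ^ 2) ^ (p - 1) * ρ) = ρ * p * fp n ρ (p - 1) x := by
    unfold fp; ring
  rw [this] at h5
  exact h5

lemma fp_fderiv_apply {ρ : ℝ} (hρ : 0 < ρ) (p : ℝ) (x v : EuclideanSpace ℝ (Fin n)) :
    fderiv ℝ (fp n ρ p) x v = ρ * p * fp n ρ (p - 1) x * (2 * inner ℝ x v) := by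
  rw [(fp_hasFDerivAt hρ p x).fderiv]
  simp [smul_smul]

lemma fp_contDiff {ρ : ℝ} (hρ : 0 < ρ) (p : ℝ) {m : WithTop ℕ∞} : ContDiff ℝ m (fp n ρ p) := by
  have h1 : ContDiff ℝ m (fun y : EuclideanSpace ℝ (Fin n) => 1 + ρ * ‖y‖ ^ 2) :=
    contDiff_const.add (contDiff_const.mul (contDiff_norm_sq ℝ))
  rw [contDiff_iff_contDiffAt]
  intro x
  exact (Real.contDiffAt_rpow_const_of_ne (base_pos hρ x).ne').comp x h1.contDiffAt

lemma fp_differentiable_fderiv {ρ : ℝ} (hρ : 0 < ρ) (p : ℝ) :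
    Differentiable ℝ (fderiv ℝ (fp n ρ p)) := by
  have h := (fp_contDiff (n := n) hρ p (m := (2 : ℕ))).fderiv_right (m := 1) (by norm_num)
  exact h.differentiable one_ne_zero

lemma fp_second {ρ : ℝ} (hρ : 0 < ρ) (p : ℝ) (z : EuclideanSpace ℝ (Fin n)) (i : Fin n) :
    iteratedFDeriv ℝ 2 (fp n ρ p) z
        ![EuclideanSpace.single i 1, EuclideanSpace.single i 1]
      = 4 * ρ ^ 2 * p * (p - 1) * fp n ρ (p - 2) z * (z i) ^ 2
        + 2 * ρ * p * fp n ρ (p - 1) z := by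
  set w : EuclideanSpace ℝ (Fin n) := EuclideanSpace.single i 1 with hw
  rw [iteratedFDeriv_two_apply]
  simp only [Matrix.cons_val_zero, Matrix.cons_val_one, Matrix.head_cons]
  have hred : fderiv ℝ (fderiv ℝ (fp n ρ p)) z w w
      = fderiv ℝ (fun x => fderiv ℝ (fp n ρ p) x w) z w := by
    have := fderiv_clm_apply (𝕜 := ℝ) (c := fderiv ℝ (fp n ρ p))
      (u := fun _ => w) ((fp_differentiable_fderiv hρ p) z) (differentiableAt_const w)
    rw [this]
    simp
  rw [hred]
  have heq : (fun x => fderiv ℝ (fp n ρ p) x w)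
      = fun x => (ρ * p * fp n ρ (p - 1) x) * (2 * inner ℝ w x) := by
    funext x
    rw [fp_fderiv_apply hρ, real_inner_comm]
  rw [heq]
  have h1 : HasFDerivAt (fun x : EuclideanSpace ℝ (Fin n) => ρ * p * fp n ρ (p - 1) x)
      ((ρ * p) • ((ρ * (p - 1) * fp n ρ (p - 1 - 1) z) • (2 • innerSL ℝ z))) z :=
    (fp_hasFDerivAt hρ (p - 1) z).const_mul (ρ * p)
  have h2 : HasFDerivAt (fun x : EuclideanSpace ℝ (Fin n) => 2 * inner ℝ w x)
      ((2 : ℝ) • (innerSL ℝ w)) z := by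
    have := ((innerSL ℝ w).hasFDerivAt (x := z)).const_smul (2 : ℝ)
    simpa [smul_eq_mul, Pi.smul_def] using this
  have h3 := h1.mul h2
  rw [show (fun x => ρ * p * fp n ρ (p - 1) x * (2 * inner ℝ w x))
      = ((fun x => ρ * p * fp n ρ (p - 1) x) * fun x => 2 * inner ℝ w x) from rfl, h3.fderiv]
  have hww : (inner ℝ w w : ℝ) = 1 := by
    simp [hw, real_inner_self_eq_norm_sq, EuclideanSpace.norm_single]
  have hzw : (inner ℝ w z : ℝ) = z i := by
    simp [hw, EuclideanSpace.inner_single_left]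
  have hp : p - 1 - 1 = p - 2 := by ring
  simp only [ContinuousLinearMap.add_apply, ContinuousLinearMap.smul_apply,
    innerSL_apply_apply, smul_eq_mul, hww, hzw, hp, real_inner_comm w z]
  ring

lemma sum_coord_sq (z : EuclideanSpace ℝ (Fin n)) : ∑ i : Fin n, (z i) ^ 2 = ‖z‖ ^ 2 := by
  rw [← real_inner_self_eq_norm_sq]
  rw [real_inner_self_eq_norm_sq, EuclideanSpace.real_norm_sq_eq]

lemma fp_mul_base {ρ : ℝ} (hρ : 0 < ρ) (p : ℝ) (z : EuclideanSpace ℝ (Fin n)) :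
    fp n ρ (p - 2) z * (1 + ρ * ‖z‖ ^ 2) = fp n ρ (p - 1) z := by
  unfold fp
  rw [show p - 1 = (p - 2) + 1 by ring, Real.rpow_add_one (base_pos hρ z).ne']

/-- Key analytic step: the Laplacian of `(1+ρ|y|²)^(-a)`. -/
lemma euclLap_fp {ρ : ℝ} (hρ : 0 < ρ) (a : ℝ) (z : EuclideanSpace ℝ (Fin n)) :
    euclLap (fp n ρ (-a)) z
      = (ρ * (4 * a * ((n : ℝ) - 2 * a - 2) / 2)) * fp n ρ (-(a + 1)) z
        + (ρ * (4 * a * (a + 1))) * fp n ρ (-(a + 2)) z := by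
  unfold euclLap
  rw [Finset.sum_congr rfl (fun i _ => fp_second hρ (-a) z i)]
  rw [Finset.sum_add_distrib, ← Finset.mul_sum, sum_coord_sq, Finset.sum_const]
  have h1 : -a - 1 = -(a + 1) := by ring
  have h2 : -a - 2 = -(a + 2) := by ring
  have hbb := fp_mul_base hρ (-a) z
  rw [h1, h2] at hbb ⊢
  simp only [Finset.card_univ, Fintype.card_fin, nsmul_eq_mul]
  linear_combination (-4 * ρ * a * (a + 1)) * hbb

lemma euclLap_sum_smul {ι : Type*} (s : Finset ι) (c : ι → ℝ)
    (g : ι → EuclideanSpace ℝ (Fin n) → ℝ) (hg : ∀ i ∈ s, ContDiff ℝ 2 (g i))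
    (y : EuclideanSpace ℝ (Fin n)) :
    euclLap (fun x => ∑ i ∈ s, c i * g i x) y = ∑ i ∈ s, c i * euclLap (g i) y := by
  unfold euclLap
  have key : ∀ j : Fin n, iteratedFDeriv ℝ 2 (fun x => ∑ i ∈ s, c i * g i x) y
      ![EuclideanSpace.single j 1, EuclideanSpace.single j 1]
      = ∑ i ∈ s, c i * iteratedFDeriv ℝ 2 (g i) y
        ![EuclideanSpace.single j 1, EuclideanSpace.single j 1] := by
    intro j
    have hsmul : ∀ i ∈ s, ContDiff ℝ 2 (fun x => c i * g i x) := by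
      intro i hi
      exact contDiff_const.mul (hg i hi)
    rw [iteratedFDeriv_sum hsmul, Finset.sum_apply, ContinuousMultilinearMap.sum_apply]
    refine Finset.sum_congr rfl fun i hi => ?_
    have : (fun x => c i * g i x) = c i • g i := by funext x; simp
    rw [this, iteratedFDeriv_const_smul_apply (hg i hi).contDiffAt]
    simp
  simp_rw [key]
  rw [Finset.sum_comm, ← Finset.sum_neg_distrib]
  exact Finset.sum_congr rfl fun i _ => by rw [← Finset.mul_sum]; ring

/-! ### Resummation and combinatorial coefficients -/

lemma resum (m : ℕ) (P Q T v : ℕ → ℝ) (h0 : T 0 = P 0) (hP : P (m + 1) = 0)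
    (hstep : ∀ i, i < m + 1 → T (i + 1) = P (i + 1) + Q i) :
    ∑ i ∈ Finset.range (m + 1), (P i * v i + Q i * v (i + 1))
      = ∑ i ∈ Finset.range (m + 2), T i * v i := by
  rw [Finset.sum_add_distrib]
  rw [Finset.sum_range_succ' (fun i => T i * v i) (m + 1)]
  have : ∑ i ∈ Finset.range (m + 1), T (i + 1) * v (i + 1)
      = ∑ i ∈ Finset.range (m + 1), (P (i + 1) * v (i + 1) + Q i * v (i + 1)) := by
    refine Finset.sum_congr rfl fun i hi => ?_
    rw [hstep i (Finset.mem_range.mp hi)]; ring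
  rw [this, Finset.sum_add_distrib, h0]
  have hPs : ∑ i ∈ Finset.range (m + 1), P i * v i
      = ∑ i ∈ Finset.range (m + 1), P (i + 1) * v (i + 1) + P 0 * v 0 := by
    rw [← Finset.sum_range_succ' (fun i => P i * v i) (m + 1),
      Finset.sum_range_succ (fun i => P i * v i) (m + 1), hP]
    ring
  rw [hPs]; ring

def RP (a0 : ℝ) (m : ℕ) : ℝ := ∏ t ∈ Finset.range m, (a0 + t)

def CC (ρ a0 : ℝ) (k j i : ℕ) : ℝ :=
  ρ ^ j * 4 ^ j * (j.choose i) * (Nat.factorial (k - 1 - i))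
    * ((Nat.factorial (k - 1 - j) : ℝ))⁻¹ * RP a0 (j + i)

lemma RP_succ (a0 : ℝ) (m : ℕ) : RP a0 (m + 1) = RP a0 m * (a0 + m) :=
  Finset.prod_range_succ _ _

lemma CC_zero_zero (ρ a0 : ℝ) (k : ℕ) : CC ρ a0 k 0 0 = 1 := by
  have h : ((Nat.factorial (k - 1) : ℝ)) ≠ 0 := Nat.cast_ne_zero.mpr (Nat.factorial_ne_zero _)
  simp [CC, RP, mul_inv_cancel₀ h]

lemma CC_top_zero (ρ a0 : ℝ) (k j i : ℕ) (h : j < i) : CC ρ a0 k j i = 0 := by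
  simp [CC, Nat.choose_eq_zero_of_lt h]

lemma CC_succ_zero (ρ a0 : ℝ) {k j : ℕ} (hj : j + 2 ≤ k) :
    CC ρ a0 k (j + 1) 0
      = CC ρ a0 k j 0 * (ρ * (4 * (a0 + (j:ℝ) + 0) * ((k : ℝ) - 1 - j - 0))) := by
  obtain ⟨q, rfl⟩ : ∃ q, k = j + 2 + q := ⟨k - (j + 2), by omega⟩
  have e1 : j + 2 + q - 1 - (j + 1) = q := by omega
  have e2 : j + 2 + q - 1 - j = q + 1 := by omega
  unfold CC
  rw [e1, e2, RP_succ]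
  push_cast [Nat.factorial_succ]
  have h4 : (Nat.factorial q : ℝ) ≠ 0 := Nat.cast_ne_zero.mpr (Nat.factorial_ne_zero _)
  field_simp
  simp only [Nat.choose_zero_right]
  ring

lemma CC_succ_succ (ρ a0 : ℝ) {k j i : ℕ} (hj : j + 2 ≤ k) (hi : i ≤ j) :
    CC ρ a0 k (j + 1) (i + 1)
      = CC ρ a0 k j (i + 1) * (ρ * (4 * (a0 + (j:ℝ) + (i + 1)) * ((k : ℝ) - 1 - j - (i + 1))))
        + CC ρ a0 k j i * (ρ * (4 * (a0 + (j:ℝ) + i) * (a0 + (j:ℝ) + i + 1))) := by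
  obtain ⟨q, rfl⟩ : ∃ q, k = j + 2 + q := ⟨k - (j + 2), by omega⟩
  have hb : (j.choose (i + 1) : ℝ) * (i + 1) = (j.choose i : ℝ) * ((j : ℝ) - i) := by
    have h := Nat.choose_succ_right_eq j i
    have hcast : ((j.choose (i + 1)) : ℝ) * (((i + 1) : ℕ) : ℝ)
        = (j.choose i : ℝ) * ((j - i : ℕ) : ℝ) := by
      exact_mod_cast congrArg (Nat.cast (R := ℝ)) h
    rw [Nat.cast_sub hi] at hcast
    push_cast at hcast ⊢
    linarith [hcast]
  have e1 : j + 2 + q - 1 - (j + 1) = q := by omega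
  have e2 : j + 2 + q - 1 - j = q + 1 := by omega
  have e4 : j + 2 + q - 1 - (i + 1) = j + q - i := by omega
  have e5 : j + 2 + q - 1 - i = (j + q - i) + 1 := by omega
  have hs : ((j + q - i : ℕ) : ℝ) = (j:ℝ) + q - i := by
    rw [Nat.cast_sub (by omega)]; push_cast; ring
  have hfq : ((Nat.factorial q : ℝ))⁻¹
      = ((q:ℝ) + 1) * ((Nat.factorial (q + 1) : ℝ))⁻¹ := by
    rw [Nat.factorial_succ]
    have h4 : (Nat.factorial q : ℝ) ≠ 0 := Nat.cast_ne_zero.mpr (Nat.factorial_ne_zero _)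
    push_cast
    rw [mul_inv]
    field_simp
  unfold CC
  rw [e1, e2, e4, e5, Nat.choose_succ_succ, show j + 1 + (i + 1) = (j + i) + 1 + 1 by omega,
    RP_succ, RP_succ, show j + (i+1) = (j + i) + 1 by omega, RP_succ,
    Nat.factorial_succ (j + q - i), hfq]
  push_cast [hs]
  linear_combination ((4:ℝ)^(j+1) * ρ^(j+1) * (Nat.factorial (j + q - i) : ℝ)
      * ((Nat.factorial (q + 1) : ℝ))⁻¹ * RP a0 (j + i)
      * (a0 + (j:ℝ) + i) * (a0 + (j:ℝ) + i + 1)) * hb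

lemma CC_final_cancel (ρ a0 : ℝ) {K i : ℕ} (hi : i + 1 ≤ K) :
    CC ρ a0 (K + 1) K (i + 1) * (ρ * (4 * (a0 + (K:ℝ) + (i + 1)) * (-((i:ℝ) + 1))))
      + CC ρ a0 (K + 1) K i * (ρ * (4 * (a0 + (K:ℝ) + i) * (a0 + (K:ℝ) + i + 1))) = 0 := by
  have hb : (K.choose (i + 1) : ℝ) * (i + 1) = (K.choose i : ℝ) * ((K : ℝ) - i) := by
    have h := Nat.choose_succ_right_eq K i
    have hcast : ((K.choose (i + 1)) : ℝ) * (((i + 1) : ℕ) : ℝ)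
        = (K.choose i : ℝ) * ((K - i : ℕ) : ℝ) := by
      exact_mod_cast congrArg (Nat.cast (R := ℝ)) h
    rw [Nat.cast_sub (by omega)] at hcast
    push_cast at hcast ⊢
    linarith [hcast]
  have e1 : K + 1 - 1 - K = 0 := by omega
  have e4 : K + 1 - 1 - (i + 1) = K - i - 1 := by omega
  have e5 : K + 1 - 1 - i = (K - i - 1) + 1 := by omega
  have hs : ((K - i - 1 : ℕ) : ℝ) = (K:ℝ) - i - 1 := by
    rw [show K - i - 1 = K - (i+1) by omega, Nat.cast_sub (by omega)]; push_cast; ring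
  unfold CC
  rw [e1, e4, e5, show K + (i + 1) = (K + i) + 1 by omega, RP_succ,
    Nat.factorial_succ (K - i - 1), Nat.factorial_zero]
  push_cast [hs]
  linear_combination (-((4:ℝ)^K * ρ^(K+1) * 4 * (Nat.factorial (K - i - 1) : ℝ)
      * RP a0 (K + i) * (a0 + (K:ℝ) + i) * (a0 + (K:ℝ) + i + 1))) * hb

lemma CC_final_top (ρ a0 : ℝ) (K : ℕ) :
    CC ρ a0 (K + 1) K K * (ρ * (4 * (a0 + (K:ℝ) + K) * (a0 + (K:ℝ) + K + 1)))
      = ρ ^ (K + 1) * 4 ^ (K + 1) * RP a0 (2 * (K + 1)) := by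
  have e1 : K + 1 - 1 - K = 0 := by omega
  unfold CC
  rw [e1, show 2 * (K + 1) = (K + K) + 1 + 1 by omega, RP_succ, RP_succ,
    Nat.choose_self, Nat.factorial_zero]
  push_cast
  ring

/-! ### The constant `ρ` -/

lemma prodNK_pos {n k : ℕ} (hnk : 2 * k < n) :
    0 < ∏ j ∈ Finset.range (2 * k), ((n : ℝ) + 2 * j - 2 * k) := by
  refine Finset.prod_pos fun j _ => ?_
  have : (2 * k : ℝ) < n := by exact_mod_cast hnk
  have hj : (0:ℝ) ≤ 2 * j := by positivity
  linarith

lemma rho_pos {n k : ℕ} (hnk : 2 * k < n) : 0 < rhoNK n k :=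
  Real.rpow_pos_of_pos (prodNK_pos hnk) _

lemma rho_prod {n k : ℕ} (hk : 1 ≤ k) (hnk : 2 * k < n) :
    (rhoNK n k) ^ k * (4 ^ k * RP (((n:ℝ) - 2 * k) / 2) (2 * k)) = 1 := by
  set P : ℝ := ∏ j ∈ Finset.range (2 * k), ((n : ℝ) + 2 * j - 2 * k) with hP
  have hPpos := prodNK_pos (n := n) (k := k) hnk
  have h1 : (4:ℝ) ^ k * RP (((n:ℝ) - 2 * k) / 2) (2 * k) = P := by
    rw [hP, RP]
    rw [show (∏ j ∈ Finset.range (2 * k), ((n:ℝ) + 2 * j - 2 * k))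
        = ∏ t ∈ Finset.range (2 * k), ((2:ℝ) * (((n:ℝ) - 2 * k) / 2 + t)) from
      Finset.prod_congr rfl fun j _ => by ring]
    rw [Finset.prod_mul_distrib, Finset.prod_const, Finset.card_range,
      show (4:ℝ) ^ k = 2 ^ (2 * k) by rw [pow_mul]; norm_num]
  rw [h1]
  have h2 : (rhoNK n k) ^ k = P⁻¹ := by
    rw [rhoNK, ← hP, ← Real.rpow_natCast (P ^ (-(1:ℝ)/k)) k, ← Real.rpow_mul hPpos.le]
    rw [show (-(1:ℝ)/k) * k = -1 by
      field_simp]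
    exact Real.rpow_neg_one P
  rw [h2, inv_mul_cancel₀ hPpos.ne']

/-! ### Main theorem -/

theorem bubble_satisfies_critical_equation (n k : ℕ) (hk : 1 ≤ k) (hnk : 2 * k < n) :
    ∀ y : EuclideanSpace ℝ (Fin n),
      (euclLap^[k] (bubble n k)) y
        = bubble n k y ^ (((n : ℝ) + 2 * k) / ((n : ℝ) - 2 * k)) := by
  intro y
  obtain ⟨K, rfl⟩ : ∃ K, k = K + 1 := ⟨k - 1, by omega⟩
  set ρ := rhoNK n (K + 1) with hρdef
  have hρ : 0 < ρ := rho_pos hnk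
  set a0 : ℝ := ((n:ℝ) - 2 * (K + 1 : ℕ)) / 2 with ha0
  have hnkR : (2 * (K + 1) : ℝ) < n := by exact_mod_cast hnk
  have hn : (n:ℝ) = 2 * a0 + 2 * ((K:ℝ) + 1) := by rw [ha0]; push_cast; ring
  have hbubble : bubble n (K + 1) = fp n ρ (-a0) := rfl
  have hrho1 : ρ ^ (K + 1) * (4 ^ (K + 1) * RP a0 (2 * (K + 1))) = 1 := by
    have h := rho_prod (n := n) (k := K + 1) (by omega) hnk
    rw [← ha0] at h
    exact h
  clear_value ρ a0
  -- the Laplacian step in the indexed form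
  have hstepLap : ∀ (j i : ℕ) (z : EuclideanSpace ℝ (Fin n)),
      euclLap (fp n ρ (-(a0 + (j:ℝ) + i))) z
        = (ρ * (4 * (a0 + (j:ℝ) + i) * (((K + 1 : ℕ) : ℝ) - 1 - j - i)))
            * fp n ρ (-(a0 + (j:ℝ) + i + 1)) z
          + (ρ * (4 * (a0 + (j:ℝ) + i) * (a0 + (j:ℝ) + i + 1)))
            * fp n ρ (-(a0 + (j:ℝ) + i + 2)) z := by
    intro j i z
    rw [euclLap_fp hρ (a0 + (j:ℝ) + i) z]
    have hc : ρ * (4 * (a0 + (j:ℝ) + i) * ((n : ℝ) - 2 * (a0 + (j:ℝ) + i) - 2) / 2)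
        = ρ * (4 * (a0 + (j:ℝ) + i) * (((K + 1 : ℕ) : ℝ) - 1 - j - i)) := by
      rw [hn]; push_cast; ring
    rw [hc]
  -- main induction
  have main : ∀ j, j ≤ K → euclLap^[j] (fp n ρ (-a0))
      = fun z => ∑ i ∈ Finset.range (j + 1),
          CC ρ a0 (K + 1) j i * fp n ρ (-(a0 + (j:ℝ) + i)) z := by
    intro j
    induction j with
    | zero =>
      intro _
      rw [Function.iterate_zero]
      funext z
      rw [Finset.sum_range_one, CC_zero_zero]
      norm_num
    | succ j ih =>
      intro hj1
      rw [Function.iterate_succ_apply', ih (by omega)]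
      funext z
      rw [euclLap_sum_smul (Finset.range (j + 1)) (fun i => CC ρ a0 (K + 1) j i)
        (fun i => fp n ρ (-(a0 + (j:ℝ) + i))) (fun i _ => fp_contDiff hρ _) z]
      have hexp : ∀ i : ℕ, CC ρ a0 (K + 1) j i * euclLap (fp n ρ (-(a0 + (j:ℝ) + i))) z
          = (CC ρ a0 (K + 1) j i
              * (ρ * (4 * (a0 + (j:ℝ) + i) * (((K + 1 : ℕ) : ℝ) - 1 - j - i))))
              * (fun m : ℕ => fp n ρ (-(a0 + (j:ℝ) + 1 + m)) z) i
            + (CC ρ a0 (K + 1) j i * (ρ * (4 * (a0 + (j:ℝ) + i) * (a0 + (j:ℝ) + i + 1))))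
              * (fun m : ℕ => fp n ρ (-(a0 + (j:ℝ) + 1 + m)) z) (i + 1) := by
        intro i
        rw [hstepLap j i z]
        have c1 : fp n ρ (-(a0 + (j:ℝ) + i + 1)) z
            = fp n ρ (-(a0 + (j:ℝ) + 1 + (i:ℝ))) z := by
          congr 1; ring
        have c2 : fp n ρ (-(a0 + (j:ℝ) + i + 2)) z
            = fp n ρ (-(a0 + (j:ℝ) + 1 + ((i:ℕ) + 1 : ℕ))) z := by
          congr 1; push_cast; ring
        rw [c1, c2]
        ring
      rw [Finset.sum_congr rfl fun i _ => hexp i]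
      rw [resum j
        (fun i => CC ρ a0 (K + 1) j i
            * (ρ * (4 * (a0 + (j:ℝ) + i) * (((K + 1 : ℕ) : ℝ) - 1 - j - i))))
        (fun i => CC ρ a0 (K + 1) j i * (ρ * (4 * (a0 + (j:ℝ) + i) * (a0 + (j:ℝ) + i + 1))))
        (fun i => CC ρ a0 (K + 1) (j + 1) i)
        (fun m => fp n ρ (-(a0 + (j:ℝ) + 1 + m)) z)
        (by beta_reduce; rw [CC_succ_zero ρ a0 (by omega)]; push_cast; ring)
        (by beta_reduce; rw [CC_top_zero ρ a0 (K + 1) j (j + 1) (by omega)]; ring)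
        (fun i hi => by
          beta_reduce
          rw [CC_succ_succ ρ a0 (by omega) (by omega)]; push_cast; ring)]
      refine Finset.sum_congr rfl fun i _ => ?_
      congr 2
      push_cast; ring
  -- final step
  rw [hbubble, Function.iterate_succ_apply', main K le_rfl]
  rw [euclLap_sum_smul (Finset.range (K + 1)) (fun i => CC ρ a0 (K + 1) K i)
    (fun i => fp n ρ (-(a0 + (K:ℝ) + i))) (fun i _ => fp_contDiff hρ _) y]
  have hexp : ∀ i : ℕ, CC ρ a0 (K + 1) K i * euclLap (fp n ρ (-(a0 + (K:ℝ) + i))) y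
      = (CC ρ a0 (K + 1) K i
          * (ρ * (4 * (a0 + (K:ℝ) + i) * (((K + 1 : ℕ) : ℝ) - 1 - K - i))))
          * (fun m : ℕ => fp n ρ (-(a0 + (K:ℝ) + 1 + m)) y) i
        + (CC ρ a0 (K + 1) K i * (ρ * (4 * (a0 + (K:ℝ) + i) * (a0 + (K:ℝ) + i + 1))))
          * (fun m : ℕ => fp n ρ (-(a0 + (K:ℝ) + 1 + m)) y) (i + 1) := by
    intro i
    rw [hstepLap K i y]
    have c1 : fp n ρ (-(a0 + (K:ℝ) + i + 1)) y
        = fp n ρ (-(a0 + (K:ℝ) + 1 + (i:ℝ))) y := by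
      congr 1; ring
    have c2 : fp n ρ (-(a0 + (K:ℝ) + i + 2)) y
        = fp n ρ (-(a0 + (K:ℝ) + 1 + ((i:ℕ) + 1 : ℕ))) y := by
      congr 1; push_cast; ring
    rw [c1, c2]
    ring
  rw [Finset.sum_congr rfl fun i _ => hexp i]
  set c : ℝ := ρ ^ (K + 1) * 4 ^ (K + 1) * RP a0 (2 * (K + 1)) with hc
  rw [resum K
    (fun i => CC ρ a0 (K + 1) K i
        * (ρ * (4 * (a0 + (K:ℝ) + i) * (((K + 1 : ℕ) : ℝ) - 1 - K - i))))
    (fun i => CC ρ a0 (K + 1) K i * (ρ * (4 * (a0 + (K:ℝ) + i) * (a0 + (K:ℝ) + i + 1))))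
    (fun i => if i = K + 1 then c else 0)
    (fun m => fp n ρ (-(a0 + (K:ℝ) + 1 + m)) y)
    (by beta_reduce; rw [if_neg (by omega : ¬ (0:ℕ) = K + 1)]; push_cast; ring)
    (by beta_reduce; rw [CC_top_zero ρ a0 (K + 1) K (K + 1) (by omega)]; ring)
    (fun i hi => by
      beta_reduce
      by_cases hiK : i + 1 = K + 1
      · rw [if_pos hiK, show i = K from by omega, hc,
          CC_top_zero ρ a0 (K + 1) K (K + 1) (by omega)]
        push_cast
        linear_combination -CC_final_top ρ a0 K
      · rw [if_neg hiK]
        have := CC_final_cancel ρ a0 (K := K) (i := i) (by omega)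
        push_cast at this ⊢
        linear_combination -this)]
  -- collapse the sum
  rw [Finset.sum_eq_single (K + 1)
    (fun b _ hb => by rw [if_neg hb]; ring)
    (fun h => absurd (Finset.self_mem_range_succ (K + 1)) h)]
  rw [if_pos rfl]
  -- identify the constant and the power
  have hX : (0:ℝ) < 1 + ρ * ‖y‖ ^ 2 := base_pos hρ y
  have hcoef : c = 1 := by
    rw [hc, ← hrho1]
    ring
  have hne : (n:ℝ) - 2 * ((K + 1 : ℕ) : ℝ) ≠ 0 := by push_cast; linarith [hnkR]
  have hexp2 : fp n ρ (-(a0 + (K:ℝ) + 1 + ((K + 1 : ℕ) : ℝ))) y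
      = bubble n (K + 1) y ^ (((n : ℝ) + 2 * ((K + 1 : ℕ) : ℝ)) / ((n : ℝ) - 2 * ((K + 1 : ℕ) : ℝ))) := by
    rw [hbubble]
    unfold fp
    rw [← Real.rpow_mul hX.le]
    congr 1
    rw [ha0]
    push_cast at hne ⊢
    field_simp
    ring
  rw [hcoef, one_mul, hexp2]
  rw [hbubble]
end
end

section
/- Let n > 2k, B(y) = (1+ρ_{n,k}|y|²)^{-(n-2k)/2}, and Z_j = ∂B/∂y_j for j = 1,…,n. Then Δ^k Z_j = ((n+2k)/(n-2k)) · B^{4k/(n-2k)} · Z_j on ℝⁿ. -/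
noncomputable section

open MeasureTheory Real
open Finset
set_option maxHeartbeats 2000000

/-- `Z_j = ∂B/∂y_j`. -/
def Zj (n k : ℕ) (j : Fin n) (y : EuclideanSpace ℝ (Fin n)) : ℝ :=
  fderiv ℝ (bubble n k) y (EuclideanSpace.single j 1)

namespace ZjAux

variable (n k : ℕ)

local notation "E" => EuclideanSpace ℝ (Fin n)

/-- base of the bubble -/
def W (z : E) : ℝ := 1 + rhoNK n k * ‖z‖ ^ 2

/-- positivity of the product defining rho -/
lemma Qpos (hnk : 2 * k < n) : 0 < ∏ j ∈ Finset.range (2 * k), ((n : ℝ) + 2 * j - 2 * k) := by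
  apply Finset.prod_pos
  intro j _
  have : (2 * k : ℝ) < n := by exact_mod_cast hnk
  have hj : (0:ℝ) ≤ j := Nat.cast_nonneg j
  nlinarith

lemma rho_pos (hnk : 2 * k < n) : 0 < rhoNK n k :=
  Real.rpow_pos_of_pos (Qpos n k hnk) _

lemma W_pos (hnk : 2 * k < n) (z : E) : 0 < W n k z := by
  have := rho_pos n k hnk
  have h2 : (0:ℝ) ≤ ‖z‖ ^ 2 := sq_nonneg _
  have : 0 ≤ rhoNK n k * ‖z‖ ^ 2 := by positivity
  unfold W; linarith

lemma normsq_eq (z : E) : ‖z‖ ^ 2 = ∑ i : Fin n, z i ^ 2 := by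
  rw [EuclideanSpace.norm_eq, Real.sq_sqrt]
  · simp [Real.norm_eq_abs, sq_abs]
  · positivity

/-- derivative of the squared norm, as an explicit CLM -/
def LQ (y : E) : E →L[ℝ] ℝ := ∑ i : Fin n, (2 * y i) • EuclideanSpace.proj i

lemma hasFDerivAt_sq (i : Fin n) (y : E) :
    HasFDerivAt (fun z : E => z i ^ 2) ((2 * y i) • (EuclideanSpace.proj i : E →L[ℝ] ℝ)) y := by
  have h := ((EuclideanSpace.proj (𝕜 := ℝ) i : E →L[ℝ] ℝ).hasFDerivAt (x := y)).mul
    ((EuclideanSpace.proj (𝕜 := ℝ) i : E →L[ℝ] ℝ).hasFDerivAt (x := y))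
  have h' := h.congr_fderiv (g' := (2 * y i) • (EuclideanSpace.proj i : E →L[ℝ] ℝ))
    (by simp [two_mul, add_smul])
  simp only [pow_two]
  exact h'

lemma hasFDerivAt_Q (y : E) :
    HasFDerivAt (fun z : E => ∑ i : Fin n, z i ^ 2) (LQ n y) y :=
  HasFDerivAt.fun_sum fun i _ => hasFDerivAt_sq n i y

lemma LQ_apply (y : E) (l : Fin n) : LQ n y (EuclideanSpace.single l 1) = 2 * y l := by
  simp only [LQ, ContinuousLinearMap.sum_apply, ContinuousLinearMap.smul_apply,
    PiLp.proj_apply, EuclideanSpace.single_apply, smul_eq_mul]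
  rw [Finset.sum_eq_single l] <;> simp +contextual

lemma hasFDerivAt_W (y : E) :
    HasFDerivAt (W n k) (rhoNK n k • LQ n y) y := by
  have h : HasFDerivAt (fun z : E => 1 + rhoNK n k * ∑ i : Fin n, z i ^ 2)
      (rhoNK n k • LQ n y) y := by
    simpa using ((hasFDerivAt_Q n y).const_mul (rhoNK n k)).const_add 1
  have : (fun z : E => 1 + rhoNK n k * ∑ i : Fin n, z i ^ 2) = W n k := by
    funext z; rw [W, normsq_eq]
  rwa [this] at h

lemma contDiff_W : ContDiff ℝ ⊤ (W n k) := by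
  unfold W
  exact contDiff_const.add (contDiff_const.mul (contDiff_norm_sq ℝ))

lemma hasFDerivAt_Wpow (hnk : 2 * k < n) (p : ℝ) (y : E) :
    HasFDerivAt (fun z => W n k z ^ p) ((p * W n k y ^ (p - 1)) • (rhoNK n k • LQ n y)) y :=
  (hasFDerivAt_W n k y).rpow_const (Or.inl (W_pos n k hnk y).ne')

lemma contDiff_Wpow (hnk : 2 * k < n) (p : ℝ) : ContDiff ℝ ⊤ (fun z => W n k z ^ p) := by
  rw [contDiff_iff_contDiffAt]
  intro y
  exact ((contDiff_W n k).contDiffAt).rpow_const_of_ne (W_pos n k hnk y).ne'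

/-- The basic building block `G s z = z j * (W z)^(-s)`. -/
def G (j : Fin n) (s : ℝ) (z : E) : ℝ := z j * W n k z ^ (-s)

lemma contDiff_G (hnk : 2 * k < n) (j : Fin n) (s : ℝ) : ContDiff ℝ ⊤ (G n k j s) :=
  ((EuclideanSpace.proj (𝕜 := ℝ) j : E →L[ℝ] ℝ).contDiff).mul (contDiff_Wpow n k hnk (-s))


variable {n k}

lemma hasFDerivAt_G (hnk : 2 * k < n) (j : Fin n) (s : ℝ) (y : E) :
    HasFDerivAt (G n k j s)
      ((y j) • ((-s * W n k y ^ (-s - 1)) • (rhoNK n k • LQ n y))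
        + (W n k y ^ (-s)) • (EuclideanSpace.proj j : E →L[ℝ] ℝ)) y :=
  ((EuclideanSpace.proj (𝕜 := ℝ) j : E →L[ℝ] ℝ).hasFDerivAt).mul
    (hasFDerivAt_Wpow n k hnk (-s) y)

lemma fderiv_G_apply (hnk : 2 * k < n) (j : Fin n) (s : ℝ) (z : E) (i : Fin n) :
    fderiv ℝ (G n k j s) z (EuclideanSpace.single i 1)
      = (-2*s*rhoNK n k) * (z j * z i * W n k z ^ (-s - 1))
        + (if j = i then 1 else 0) * W n k z ^ (-s) := by
  rw [(hasFDerivAt_G hnk j s z).fderiv]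
  simp only [ContinuousLinearMap.add_apply, ContinuousLinearMap.smul_apply,
    PiLp.proj_apply, EuclideanSpace.single_apply, LQ_apply, smul_eq_mul]
  ring

lemma diff_fderiv_G (hnk : 2 * k < n) (j : Fin n) (s : ℝ) (y : E) :
    DifferentiableAt ℝ (fderiv ℝ (G n k j s)) y :=
  (((contDiff_G n k hnk j s).fderiv_right (m := 1) le_top).differentiable one_ne_zero) y

lemma iterated2_G (hnk : 2 * k < n) (j : Fin n) (s : ℝ) (y : E) (i : Fin n) :
    iteratedFDeriv ℝ 2 (G n k j s) y
        ![EuclideanSpace.single i 1, EuclideanSpace.single i 1]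
      = fderiv ℝ (fun z => fderiv ℝ (G n k j s) z (EuclideanSpace.single i 1)) y
          (EuclideanSpace.single i 1) := by
  rw [iteratedFDeriv_two_apply]
  rw [fderiv_clm_apply (diff_fderiv_G hnk j s y) (differentiableAt_const _)]
  simp


lemma sd (hnk : 2 * k < n) (j : Fin n) (s : ℝ) (i : Fin n) (y : E) :
    fderiv ℝ (fun z => fderiv ℝ (G n k j s) z (EuclideanSpace.single i 1)) y
        (EuclideanSpace.single i 1)
      = (-2*s*rhoNK n k) *
          ((y j * y i) * ((-s-1) * W n k y ^ (-s-1-1) * (rhoNK n k * (2 * y i)))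
            + W n k y ^ (-s-1) * (y j * 1 + y i * (if j = i then 1 else 0)))
        + (if j = i then 1 else 0) * (-s * W n k y ^ (-s-1) * (rhoNK n k * (2 * y i))) := by
  have hfun : (fun z => fderiv ℝ (G n k j s) z (EuclideanSpace.single i 1))
      = fun z => (-2*s*rhoNK n k) * (z j * z i * W n k z ^ (-s-1))
          + (if j = i then 1 else 0) * W n k z ^ (-s) :=
    funext fun z => fderiv_G_apply hnk j s z i
  rw [hfun]
  have h1 := ((EuclideanSpace.proj (𝕜 := ℝ) j : E →L[ℝ] ℝ).hasFDerivAt (x := y)).mul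
    ((EuclideanSpace.proj (𝕜 := ℝ) i : E →L[ℝ] ℝ).hasFDerivAt (x := y))
  have h2 := h1.mul (hasFDerivAt_Wpow n k hnk (-s-1) y)
  have h3 := h2.const_mul (-2*s*rhoNK n k)
  have h4 := (hasFDerivAt_Wpow n k hnk (-s) y).const_mul (if j = i then (1:ℝ) else 0)
  have h5 := h3.add h4
  have h5' : HasFDerivAt
      (fun z : E => -2*s*rhoNK n k * (z j * z i * W n k z ^ (-s-1))
        + (if j = i then 1 else 0) * W n k z ^ (-s)) _ y := h5
  rw [Pi.mul_apply] at h5'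
  rw [h5'.fderiv]
  simp only [ContinuousLinearMap.add_apply, ContinuousLinearMap.smul_apply,
    PiLp.proj_apply, EuclideanSpace.single_apply, LQ_apply, smul_eq_mul,
    eq_self_iff_true, if_true]

lemma euclLap_G (hnk : 2 * k < n) (j : Fin n) (s : ℝ) (y : E) :
    euclLap (G n k j s) y
      = rhoNK n k * ((2*(n:ℝ) - 4*s) * s * G n k j (s+1) y
          + 4*s*(s+1) * G n k j (s+2) y) := by
  unfold euclLap
  rw [Finset.sum_congr rfl (fun i _ => (iterated2_G hnk j s y i).trans (sd hnk j s i y))]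
  have hsplit : ∀ i : Fin n,
      (-2*s*rhoNK n k) *
          ((y j * y i) * ((-s-1) * W n k y ^ (-s-1-1) * (rhoNK n k * (2 * y i)))
            + W n k y ^ (-s-1) * (y j * 1 + y i * (if j = i then 1 else 0)))
        + (if j = i then 1 else 0) * (-s * W n k y ^ (-s-1) * (rhoNK n k * (2 * y i)))
      = (-2*s*rhoNK n k * (-s-1) * W n k y ^ (-s-1-1) * rhoNK n k * 2 * y j) * (y i)^2
        + (-4*s*rhoNK n k * W n k y ^ (-s-1)) * (if j = i then y i else 0)
        + (-2*s*rhoNK n k * W n k y ^ (-s-1) * y j) := by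
    intro i
    by_cases h : j = i
    · subst h; simp only [eq_self_iff_true, if_true]; ring
    · simp only [if_neg h]; ring
  rw [Finset.sum_congr rfl (fun i _ => hsplit i)]
  simp only [Finset.sum_add_distrib, ← Finset.mul_sum, Finset.sum_ite_eq,
    Finset.sum_ite_eq', Finset.mem_univ, if_pos, Finset.sum_const, Finset.card_univ,
    Fintype.card_fin, nsmul_eq_mul]
  rw [← normsq_eq]
  have hAB : W n k y * W n k y ^ (-s-1-1 : ℝ) = W n k y ^ (-s-1 : ℝ) := by
    rw [Real.rpow_sub_one (W_pos n k hnk y).ne']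
    field_simp [(W_pos n k hnk y).ne']
  unfold G
  rw [show (-(s+1):ℝ) = -s-1 by ring, show (-(s+2):ℝ) = -s-1-1 by ring, ← hAB]
  unfold W
  ring


lemma euclLap_const_mul (f : E → ℝ) (hf : ContDiff ℝ (2:ℕ) f) (c : ℝ) (x : E) :
    euclLap (fun y => c * f y) x = c * euclLap f x := by
  unfold euclLap
  have h : ∀ i : Fin n,
      iteratedFDeriv ℝ 2 (fun y => c * f y) x
          ![EuclideanSpace.single i 1, EuclideanSpace.single i 1]
        = c * iteratedFDeriv ℝ 2 f x
            ![EuclideanSpace.single i 1, EuclideanSpace.single i 1] := by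
    intro i
    have hfun : (fun y => c * f y) = c • f := by funext y; simp
    rw [hfun, iteratedFDeriv_const_smul_apply hf.contDiffAt]
    simp
  rw [Finset.sum_congr rfl fun i _ => h i, ← Finset.mul_sum]
  ring

lemma euclLap_add (f g : E → ℝ) (hf : ContDiff ℝ (2:ℕ) f) (hg : ContDiff ℝ (2:ℕ) g)
    (x : E) : euclLap (fun y => f y + g y) x = euclLap f x + euclLap g x := by
  unfold euclLap
  have h : ∀ i : Fin n,
      iteratedFDeriv ℝ 2 (fun y => f y + g y) x
          ![EuclideanSpace.single i 1, EuclideanSpace.single i 1]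
        = iteratedFDeriv ℝ 2 f x ![EuclideanSpace.single i 1, EuclideanSpace.single i 1]
          + iteratedFDeriv ℝ 2 g x ![EuclideanSpace.single i 1, EuclideanSpace.single i 1] := by
    intro i
    have hfun : (fun y => f y + g y) = f + g := rfl
    rw [hfun, iteratedFDeriv_add_apply hf.contDiffAt hg.contDiffAt]
    simp
  rw [Finset.sum_congr rfl fun i _ => h i, Finset.sum_add_distrib]
  ring

lemma euclLap_sum {ι : Type*} (u : Finset ι) (f : ι → E → ℝ)
    (hf : ∀ i ∈ u, ContDiff ℝ (2:ℕ) (f i)) (x : E) :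
    euclLap (fun y => ∑ i ∈ u, f i y) x = ∑ i ∈ u, euclLap (f i) x := by
  classical
  induction u using Finset.induction_on with
  | empty => simp [euclLap]
  | insert a u ha ih =>
    have hfun : (fun y => ∑ i ∈ insert a u, f i y)
        = fun y => f a y + ∑ i ∈ u, f i y := by
      funext y; rw [Finset.sum_insert ha]
    rw [hfun, euclLap_add _ _ (hf a (Finset.mem_insert_self a u))
      (ContDiff.sum fun i hi => hf i (Finset.mem_insert_of_mem hi)) x,
      ih (fun i hi => hf i (Finset.mem_insert_of_mem hi)), Finset.sum_insert ha]


/-- product of linear factors -/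
def Pp (n k : ℕ) (t : ℕ) : ℝ := ∏ l ∈ Finset.range t, ((n:ℝ) - 2*k + 2*(l+1))

/-- rising factorial part -/
def Rr (k m i : ℕ) : ℝ := ∏ l ∈ Finset.range i, ((k:ℝ) - m + l)

def Coef (n k m i : ℕ) : ℝ := 2^i * (m.choose i : ℝ) * Rr k m i * Pp n k (2*m - i)

def s0 (n k : ℕ) : ℝ := ((n:ℝ) - 2*k)/2 + 1

lemma Psucc (t : ℕ) : Pp n k (t+1) = Pp n k t * ((n:ℝ) - 2*k + 2*((t:ℝ)+1)) := by
  unfold Pp; rw [Finset.prod_range_succ]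

lemma Rsucc (m i : ℕ) : Rr k m (i+1) = Rr k m i * ((k:ℝ) - m + i) := by
  unfold Rr; rw [Finset.prod_range_succ]

lemma Rshift (m i : ℕ) : Rr k (m+1) (i+1) = ((k:ℝ) - m - 1) * Rr k m i := by
  induction i with
  | zero => simp [Rr]; ring
  | succ i ih => rw [Rsucc, ih, Rsucc]; push_cast; ring

lemma coef_top (m : ℕ) : Coef n k m (m+1) = 0 := by
  simp [Coef, Nat.choose_succ_self]

lemma coef_zero (m : ℕ) :
    Coef n k (m+1) 0
      = Coef n k m 0 * (4*(s0 n k + 2*(m:ℝ) - (0:ℕ))*((s0 n k + 2*(m:ℝ) - (0:ℕ))+1)) := by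
  unfold Coef
  rw [show 2*(m+1) - 0 = (2*m)+1+1 from by omega, show 2*m - 0 = 2*m from by omega,
    Psucc, Psucc]
  simp only [Rr, Finset.prod_range_zero, Nat.choose_zero_right]
  unfold s0; push_cast; ring

lemma coef_succ (m i : ℕ) (him : i ≤ m) :
    Coef n k (m+1) (i+1)
      = Coef n k m i * ((2*(n:ℝ) - 4*(s0 n k + 2*(m:ℝ) - (i:ℝ))) * (s0 n k + 2*(m:ℝ) - (i:ℝ)))
        + Coef n k m (i+1)
            * (4*(s0 n k + 2*(m:ℝ) - ((i:ℕ)+1:ℕ))*((s0 n k + 2*(m:ℝ) - ((i:ℕ)+1:ℕ))+1)) := by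
  rcases Nat.lt_or_ge i m with hlt | hge
  · -- i < m
    obtain ⟨t, h2⟩ : ∃ t, 2*m - i = t + 1 := ⟨2*m - i - 1, by omega⟩
    have h1 : 2*(m+1) - (i+1) = t+1+1 := by omega
    have h3 : 2*m - (i+1) = t := by omega
    have h4 : t + 1 + i = 2*m := by omega
    have htc : (t:ℝ) = 2*(m:ℝ) - i - 1 := by
      have := congrArg (Nat.cast : ℕ → ℝ) h4
      push_cast at this; linarith
    have habs : ((m.choose (i+1) : ℕ):ℝ) * ((i:ℝ)+1) = (m.choose i : ℝ) * ((m:ℝ) - i) := by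
      have h := Nat.choose_succ_right_eq m i
      have h' := congrArg (Nat.cast : ℕ → ℝ) h
      push_cast [Nat.cast_sub him] at h'
      linarith
    have hc2 : ((m.choose (i+1) : ℕ):ℝ) = (m.choose i : ℝ) * ((m:ℝ) - i) / ((i:ℝ)+1) := by
      have hi1 : ((i:ℝ)+1) ≠ 0 := by positivity
      field_simp
      linarith
    unfold Coef
    rw [h1, h2, h3, Psucc, Psucc, Rshift, Rsucc,
      show ((m+1).choose (i+1) : ℝ) = (m.choose i : ℝ) + (m.choose (i+1) : ℝ) by
        rw [Nat.choose_succ_succ]; push_cast; ring,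
      hc2]
    push_cast
    simp only [htc]
    unfold s0
    have hi1 : ((i:ℝ)+1) ≠ 0 := by positivity
    field_simp
    ring
  · -- i = m
    have him' : i = m := le_antisymm him hge
    subst him'
    unfold Coef
    rw [show 2*(i+1) - (i+1) = i+1 from by omega, show 2*i - i = i from by omega,
      show 2*i - (i+1) = i - 1 from by omega, Psucc, Rshift]
    simp only [Nat.choose_succ_self, Nat.choose_self]
    push_cast
    unfold s0
    ring


lemma coef_rec (m : ℕ) (X : ℕ → ℝ) :
    ∑ i ∈ Finset.range (m+1+1), Coef n k (m+1) i * X i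
      = ∑ i ∈ Finset.range (m+1), Coef n k m i *
          ((2*(n:ℝ) - 4*(s0 n k + 2*(m:ℝ) - (i:ℝ))) * (s0 n k + 2*(m:ℝ) - (i:ℝ)) * X (i+1)
            + 4*(s0 n k + 2*(m:ℝ) - (i:ℝ))*((s0 n k + 2*(m:ℝ) - (i:ℝ))+1) * X i) := by
  rw [Finset.sum_range_succ' (fun i => Coef n k (m+1) i * X i) (m+1)]
  rw [Finset.sum_congr rfl (fun i hi => show
      Coef n k m i *
        ((2*(n:ℝ) - 4*(s0 n k + 2*(m:ℝ) - (i:ℝ))) * (s0 n k + 2*(m:ℝ) - (i:ℝ)) * X (i+1)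
          + 4*(s0 n k + 2*(m:ℝ) - (i:ℝ))*((s0 n k + 2*(m:ℝ) - (i:ℝ))+1) * X i)
      = (Coef n k m i * ((2*(n:ℝ) - 4*(s0 n k + 2*(m:ℝ) - (i:ℝ))) * (s0 n k + 2*(m:ℝ) - (i:ℝ))))
          * X (i+1)
        + (Coef n k m i * (4*(s0 n k + 2*(m:ℝ) - (i:ℝ))*((s0 n k + 2*(m:ℝ) - (i:ℝ))+1))) * X i
      from by ring), Finset.sum_add_distrib]
  have hS2 : ∑ i ∈ Finset.range (m+1),
        (Coef n k m i * (4*(s0 n k + 2*(m:ℝ) - (i:ℝ))*((s0 n k + 2*(m:ℝ) - (i:ℝ))+1))) * X i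
      = ∑ i ∈ Finset.range (m+1+1),
        (Coef n k m i * (4*(s0 n k + 2*(m:ℝ) - (i:ℝ))*((s0 n k + 2*(m:ℝ) - (i:ℝ))+1))) * X i := by
    rw [Finset.sum_range_succ
      (fun i => (Coef n k m i * (4*(s0 n k + 2*(m:ℝ) - (i:ℝ))*((s0 n k + 2*(m:ℝ) - (i:ℝ))+1))) * X i)
      (m+1), coef_top]
    ring
  rw [hS2, Finset.sum_range_succ'
      (fun i => (Coef n k m i * (4*(s0 n k + 2*(m:ℝ) - (i:ℝ))*((s0 n k + 2*(m:ℝ) - (i:ℝ))+1))) * X i)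
      (m+1)]
  rw [Finset.sum_congr rfl (fun i hi => show Coef n k (m+1) (i+1) * X (i+1)
      = (Coef n k m i * ((2*(n:ℝ) - 4*(s0 n k + 2*(m:ℝ) - (i:ℝ))) * (s0 n k + 2*(m:ℝ) - (i:ℝ))))
          * X (i+1)
        + (Coef n k m (i+1)
            * (4*(s0 n k + 2*(m:ℝ) - ((i+1:ℕ):ℝ))*((s0 n k + 2*(m:ℝ) - ((i+1:ℕ):ℝ))+1))) * X (i+1)
      from by
        rw [coef_succ m i (Nat.lt_succ_iff.mp (Finset.mem_range.mp hi))]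
        push_cast; ring), Finset.sum_add_distrib]
  rw [coef_zero]
  push_cast
  ring

variable (j : Fin n)

lemma Zj_eq (hnk : 2 * k < n) :
    Zj n k j = fun y => (-((n:ℝ) - 2*k) * rhoNK n k) * G n k j (s0 n k) y := by
  funext y
  unfold Zj
  have hb : bubble n k = fun z => W n k z ^ (-(((n:ℝ)-2*k)/2)) := rfl
  rw [hb, (hasFDerivAt_Wpow n k hnk (-(((n:ℝ)-2*k)/2)) y).fderiv]
  simp only [ContinuousLinearMap.smul_apply, LQ_apply, smul_eq_mul]
  unfold G
  rw [show (-(s0 n k) : ℝ) = -(((n:ℝ)-2*k)/2) - 1 from by unfold s0; ring]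
  ring

lemma main (hnk : 2 * k < n) (m : ℕ) :
    euclLap^[m] (Zj n k j) = fun y =>
      (-((n:ℝ) - 2*k) * rhoNK n k) * rhoNK n k ^ m *
        ∑ i ∈ Finset.range (m+1), Coef n k m i * G n k j (s0 n k + 2*(m:ℝ) - (i:ℝ)) y := by
  induction m with
  | zero =>
    rw [Function.iterate_zero, id_eq, Zj_eq j hnk]
    funext y
    simp [Coef, Rr, Pp]
  | succ m ih =>
    rw [Function.iterate_succ_apply', ih]
    funext y
    have hG2 : ∀ (s : ℝ), ContDiff ℝ (2:ℕ) (G n k j s) :=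
      fun s => (contDiff_G n k hnk j s).of_le le_top
    rw [euclLap_const_mul _ (ContDiff.sum fun i _ => contDiff_const.mul (hG2 _)) _ y]
    rw [euclLap_sum _ _ (fun i _ => contDiff_const.mul (hG2 _)) y]
    rw [Finset.sum_congr rfl (fun i _ =>
      euclLap_const_mul _ (hG2 _) (Coef n k m i) y)]
    rw [Finset.sum_congr rfl (fun i _ => by
      rw [euclLap_G hnk j (s0 n k + 2*(m:ℝ) - (i:ℝ)) y])]
    have hper : ∀ i ∈ Finset.range (m+1),
        Coef n k m i * (rhoNK n k *
          ((2*(n:ℝ) - 4*(s0 n k + 2*(m:ℝ) - (i:ℝ))) * (s0 n k + 2*(m:ℝ) - (i:ℝ))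
              * G n k j ((s0 n k + 2*(m:ℝ) - (i:ℝ)) + 1) y
            + 4*(s0 n k + 2*(m:ℝ) - (i:ℝ))*((s0 n k + 2*(m:ℝ) - (i:ℝ))+1)
              * G n k j ((s0 n k + 2*(m:ℝ) - (i:ℝ)) + 2) y))
      = rhoNK n k * (Coef n k m i *
          ((2*(n:ℝ) - 4*(s0 n k + 2*(m:ℝ) - (i:ℝ))) * (s0 n k + 2*(m:ℝ) - (i:ℝ))
              * G n k j (s0 n k + 2*(((m+1:ℕ)):ℝ) - ((i+1:ℕ):ℝ)) y
            + 4*(s0 n k + 2*(m:ℝ) - (i:ℝ))*((s0 n k + 2*(m:ℝ) - (i:ℝ))+1)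
              * G n k j (s0 n k + 2*(((m+1:ℕ)):ℝ) - ((i:ℕ):ℝ)) y)) := by
      intro i _
      rw [show ((s0 n k + 2*(m:ℝ) - (i:ℝ)) + 1 : ℝ)
            = s0 n k + 2*(((m+1:ℕ)):ℝ) - ((i+1:ℕ):ℝ) from by push_cast; ring,
          show ((s0 n k + 2*(m:ℝ) - (i:ℝ)) + 2 : ℝ)
            = s0 n k + 2*(((m+1:ℕ)):ℝ) - ((i:ℕ):ℝ) from by push_cast; ring]
      ring
    rw [Finset.sum_congr rfl hper, ← Finset.mul_sum]
    have hrec := coef_rec (n := n) (k := k) m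
      (fun i => G n k j (s0 n k + 2*(((m+1:ℕ)):ℝ) - ((i:ℕ):ℝ)) y)
    have hX : ∀ i ∈ Finset.range (m+1+1),
        Coef n k (m+1) i * G n k j (s0 n k + 2*((m+1:ℕ):ℝ) - (i:ℝ)) y
          = Coef n k (m+1) i
              * (fun i => G n k j (s0 n k + 2*(((m+1:ℕ)):ℝ) - ((i:ℕ):ℝ)) y) i :=
      fun i _ => rfl
    rw [Finset.sum_congr rfl hX, hrec]
    push_cast
    ring

lemma rho_pow_Pp (hk : 1 ≤ k) (hnk : 2*k < n) :
    rhoNK n k ^ k * Pp n k (2*k) = ((n:ℝ)+2*k)/((n:ℝ)-2*k) := by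
  have hQ := Qpos n k hnk
  have hknz : ((k:ℝ)) ≠ 0 := Nat.cast_ne_zero.mpr (by omega)
  have hρk : rhoNK n k ^ k = (∏ j ∈ Finset.range (2*k), ((n:ℝ) + 2*j - 2*k))⁻¹ := by
    unfold rhoNK
    rw [← Real.rpow_natCast
        ((∏ j ∈ Finset.range (2*k), ((n:ℝ) + 2*j - 2*k)) ^ (-(1:ℝ)/k)) k,
      ← Real.rpow_mul hQ.le, show (-(1:ℝ)/k) * ((k:ℕ):ℝ) = -1 from by field_simp,
      Real.rpow_neg_one]
  have e1 := Finset.prod_range_succ (fun j : ℕ => (n:ℝ) - 2*k + 2*j) (2*k)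
  have e2 := Finset.prod_range_succ' (fun j : ℕ => (n:ℝ) - 2*k + 2*j) (2*k)
  rw [Finset.prod_congr rfl (fun j _ => show ((n:ℝ) - 2*k + 2*((j+1:ℕ):ℝ))
      = (n:ℝ)-2*k+2*((j:ℝ)+1) from by push_cast; ring)] at e2
  have e5 := e1.symm.trans e2
  push_cast at e5
  have hPp : Pp n k (2*k) = ∏ j ∈ Finset.range (2*k), ((n:ℝ) - 2*k + 2*((j:ℝ)+1)) := rfl
  have hQe : (∏ j ∈ Finset.range (2*k), ((n:ℝ) + 2*j - 2*k))
      = ∏ j ∈ Finset.range (2*k), ((n:ℝ) - 2*k + 2*(j:ℝ)) :=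
    Finset.prod_congr rfl fun j _ => by ring
  have hne : ((n:ℝ) - 2*k) ≠ 0 := by
    have : (2*k:ℝ) < n := by exact_mod_cast hnk
    linarith
  have hQne : (∏ j ∈ Finset.range (2*k), ((n:ℝ) - 2*k + 2*(j:ℝ))) ≠ 0 := by
    rw [← hQe]; exact hQ.ne'
  rw [hρk, hQe, hPp]
  field_simp
  linear_combination -e5

end ZjAux

theorem Zj_satisfies_linearized_equation (n k : ℕ) (hk : 1 ≤ k) (hnk : 2 * k < n) (j : Fin n) :
    ∀ y : EuclideanSpace ℝ (Fin n),
      (euclLap^[k] (Zj n k j)) y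
        = ((n : ℝ) + 2 * k) / ((n : ℝ) - 2 * k)
            * bubble n k y ^ ((4 * k : ℝ) / ((n : ℝ) - 2 * k)) * Zj n k j y := by
  intro y
  have h := congrFun (ZjAux.main (n := n) (k := k) j hnk k) y
  rw [h]
  have hzero : ∀ i ∈ Finset.range (k+1), i ≠ 0 →
      ZjAux.Coef n k k i * ZjAux.G n k j (ZjAux.s0 n k + 2*(k:ℝ) - (i:ℝ)) y = 0 := by
    intro i _ hi
    have hR : ZjAux.Rr k k i = 0 := by
      apply Finset.prod_eq_zero (i := 0) (Finset.mem_range.mpr (Nat.pos_of_ne_zero hi))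
      push_cast; ring
    simp [ZjAux.Coef, hR]
  rw [Finset.sum_eq_single_of_mem 0 (Finset.mem_range.mpr (Nat.succ_pos k)) hzero]
  rw [show Zj n k j y = (-((n:ℝ) - 2*k) * rhoNK n k) * ZjAux.G n k j (ZjAux.s0 n k) y from
    congrFun (ZjAux.Zj_eq j hnk) y]
  have hW := ZjAux.W_pos n k hnk y
  have hne : ((n:ℝ) - 2*k) ≠ 0 := by
    have : (2*k:ℝ) < n := by exact_mod_cast hnk
    linarith
  rw [show bubble n k y = ZjAux.W n k y ^ (-(((n:ℝ)-2*k)/2)) from rfl, ← Real.rpow_mul hW.le]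
  have hc0 : ZjAux.Coef n k k 0 = ZjAux.Pp n k (2*k) := by
    simp [ZjAux.Coef, ZjAux.Rr]
  rw [hc0]
  unfold ZjAux.G
  have hab : ZjAux.W n k y ^ (-(((n:ℝ)-2*k)/2) * ((4*(k:ℝ))/((n:ℝ)-2*k)))
        * ZjAux.W n k y ^ (-(ZjAux.s0 n k))
      = ZjAux.W n k y ^ (-(ZjAux.s0 n k + 2*(k:ℝ) - ((0:ℕ):ℝ))) := by
    rw [← Real.rpow_add hW]
    congr 1
    unfold ZjAux.s0
    field_simp
    ring
  rw [← hab]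
  have hrp := ZjAux.rho_pow_Pp (n := n) (k := k) hk hnk
  linear_combination ((-((n:ℝ) - 2*k) * rhoNK n k) * y j
    * ZjAux.W n k y ^ (-(((n:ℝ)-2*k)/2) * ((4*(k:ℝ))/((n:ℝ)-2*k)))
    * ZjAux.W n k y ^ (-(ZjAux.s0 n k))) * hrp
end
end

section
/- Let p > 2 be a real number. There exist a constant C > 0 and an exponent θ with 0 < θ < min(1, p−2) such that for all b > 0 and a ∈ ℝ: |max(b+a,0)^{p-1} − b^{p-1} − (p−1)b^{p-2}a| ≤ C·|a|·(|a|^{p-2} + b^{p-2-θ}|a|^{θ}). -/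
open Real

private lemma rpow_mvt {q x y : ℝ} (hx : 0 < x) (hxy : x < y) :
    ∃ ξ, x < ξ ∧ ξ < y ∧ y ^ q - x ^ q = q * ξ ^ (q - 1) * (y - x) := by
  obtain ⟨c, hc, hslope⟩ := exists_hasDerivAt_eq_slope (fun t : ℝ => t ^ q)
    (fun t => q * t ^ (q - 1)) hxy
    (fun t ht => (Real.continuousAt_rpow_const t q
      (Or.inl (ne_of_gt (lt_of_lt_of_le hx ht.1)))).continuousWithinAt)
    (fun t ht => Real.hasDerivAt_rpow_const (Or.inl (ne_of_gt (hx.trans ht.1))))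
  refine ⟨c, hc.1, hc.2, ?_⟩
  have hne : y - x ≠ 0 := sub_ne_zero.mpr (ne_of_gt hxy)
  rw [eq_comm, div_eq_iff hne] at hslope
  linarith [hslope]

private lemma rpow_mvt' {q x y : ℝ} (hx : 0 < x) (hy : 0 < y) (hxy : x ≠ y) :
    ∃ ξ, min x y < ξ ∧ ξ < max x y ∧ y ^ q - x ^ q = q * ξ ^ (q - 1) * (y - x) := by
  rcases lt_or_gt_of_ne hxy with h | h
  · obtain ⟨ξ, h1, h2, h3⟩ := rpow_mvt (q := q) hx h
    exact ⟨ξ, by rwa [min_eq_left h.le], by rwa [max_eq_right h.le], h3⟩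
  · obtain ⟨ξ, h1, h2, h3⟩ := rpow_mvt (q := q) hy h
    exact ⟨ξ, by rwa [min_eq_right h.le], by rwa [max_eq_left h.le], by linarith⟩

theorem pointwise_estimate_one (p : ℝ) (hp : 2 < p) :
    ∃ C > (0 : ℝ), ∃ θ : ℝ, 0 < θ ∧ θ < min 1 (p - 2) ∧
      ∀ b : ℝ, 0 < b → ∀ a : ℝ,
        |max (b + a) 0 ^ (p - 1) - b ^ (p - 1) - (p - 1) * b ^ (p - 2) * a|
          ≤ C * |a| * (|a| ^ (p - 2) + b ^ (p - 2 - θ) * |a| ^ θ) := by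
  have hmin : 0 < min 1 (p - 2) := lt_min one_pos (by linarith)
  obtain ⟨θ, hθdef⟩ : ∃ x : ℝ, x = min 1 (p - 2) / 2 := ⟨_, rfl⟩
  have hθ0 : 0 < θ := by rw [hθdef]; positivity
  have hθlt : θ < min 1 (p - 2) := by rw [hθdef]; linarith
  have hθ1 : θ < 1 := lt_of_lt_of_le hθlt (min_le_left _ _)
  obtain ⟨K1, hK1⟩ : ∃ x : ℝ, x = (3:ℝ) ^ (p - 1) + 2 ^ (p - 1) + (p - 1) * 2 ^ (p - 2) :=
    ⟨_, rfl⟩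
  obtain ⟨K2, hK2⟩ : ∃ x : ℝ, x = (p - 1) * (p - 2) * ((2:ℝ) ^ (p - 3) + 2 ^ (3 - p)) :=
    ⟨_, rfl⟩
  have hp1 : (0:ℝ) < p - 1 := by linarith
  have hp2 : (0:ℝ) < p - 2 := by linarith
  have hM : (0:ℝ) < (2:ℝ) ^ (p - 3) + 2 ^ (3 - p) := by
    have := rpow_pos_of_pos (by norm_num : (0:ℝ) < 2) (p - 3)
    have := rpow_pos_of_pos (by norm_num : (0:ℝ) < 2) (3 - p)
    linarith
  have hK1pos : 0 < K1 := by
    have : (0:ℝ) < (3:ℝ) ^ (p - 1) := rpow_pos_of_pos (by norm_num) _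
    have h2 : (0:ℝ) < (2:ℝ) ^ (p - 1) := rpow_pos_of_pos (by norm_num) _
    have h3 : (0:ℝ) < (2:ℝ) ^ (p - 2) := rpow_pos_of_pos (by norm_num) _
    rw [hK1]; linarith [mul_pos hp1 h3]
  have hK2pos : 0 < K2 := by
    rw [hK2]; exact mul_pos (mul_pos hp1 hp2) hM
  refine ⟨K1 + K2, by linarith, θ, hθ0, hθlt, ?_⟩
  intro b hb a
  rcases eq_or_ne a 0 with rfl | ha0
  · have hmx : max (b + 0) 0 = b := by rw [add_zero]; exact max_eq_left hb.le
    rw [hmx]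
    simp
  have haabs : 0 < |a| := abs_pos.mpr ha0
  have hterm2 : 0 ≤ b ^ (p - 2 - θ) * |a| ^ θ := by positivity
  have hterm1 : 0 ≤ |a| ^ (p - 2) := rpow_nonneg (abs_nonneg a) _
  rcases le_or_gt b (2 * |a|) with hcase | hcase
  · -- case |a| ≥ b/2 : crude bound
    have h1 : max (b + a) 0 ^ (p - 1) ≤ 3 ^ (p - 1) * |a| ^ (p - 1) := by
      have hle : max (b + a) 0 ≤ 3 * |a| := by
        have := abs_nonneg a
        have := le_abs_self a
        apply max_le <;> linarith
      calc max (b + a) 0 ^ (p - 1) ≤ (3 * |a|) ^ (p - 1) :=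
            rpow_le_rpow (le_max_right _ _) hle (by linarith)
        _ = 3 ^ (p - 1) * |a| ^ (p - 1) := mul_rpow (by norm_num) (abs_nonneg a)
    have h2 : b ^ (p - 1) ≤ 2 ^ (p - 1) * |a| ^ (p - 1) := by
      calc b ^ (p - 1) ≤ (2 * |a|) ^ (p - 1) := rpow_le_rpow hb.le hcase (by linarith)
        _ = 2 ^ (p - 1) * |a| ^ (p - 1) := mul_rpow (by norm_num) (abs_nonneg a)
    have h3 : b ^ (p - 2) ≤ 2 ^ (p - 2) * |a| ^ (p - 2) := by
      calc b ^ (p - 2) ≤ (2 * |a|) ^ (p - 2) := rpow_le_rpow hb.le hcase (by linarith)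
        _ = 2 ^ (p - 2) * |a| ^ (p - 2) := mul_rpow (by norm_num) (abs_nonneg a)
    have hsplit : |a| ^ (p - 1) = |a| * |a| ^ (p - 2) := by
      rw [show p - 1 = 1 + (p - 2) by ring, rpow_add haabs, rpow_one]
    have hmax0 : (0:ℝ) ≤ max (b + a) 0 ^ (p - 1) := rpow_nonneg (le_max_right _ _) _
    have hb1 : (0:ℝ) < b ^ (p - 1) := rpow_pos_of_pos hb _
    have hbp2 : (0:ℝ) < b ^ (p - 2) := rpow_pos_of_pos hb _
    have habs : |max (b + a) 0 ^ (p - 1) - b ^ (p - 1) - (p - 1) * b ^ (p - 2) * a|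
        ≤ max (b + a) 0 ^ (p - 1) + b ^ (p - 1) + (p - 1) * b ^ (p - 2) * |a| := by
      have hcc : (0:ℝ) ≤ (p - 1) * b ^ (p - 2) := mul_nonneg hp1.le hbp2.le
      have h6 : (p - 1) * b ^ (p - 2) * a ≤ (p - 1) * b ^ (p - 2) * |a| :=
        mul_le_mul_of_nonneg_left (le_abs_self a) hcc
      have h7 : (p - 1) * b ^ (p - 2) * (-|a|) ≤ (p - 1) * b ^ (p - 2) * a :=
        mul_le_mul_of_nonneg_left (neg_abs_le a) hcc
      rw [abs_le]
      constructor <;> linarith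
    have h3' : (p - 1) * b ^ (p - 2) * |a| ≤ (p - 1) * (2 ^ (p - 2) * |a| ^ (p - 2)) * |a| :=
      mul_le_mul_of_nonneg_right (mul_le_mul_of_nonneg_left h3 hp1.le) (abs_nonneg a)
    rw [hsplit] at h1 h2
    have hK : max (b + a) 0 ^ (p - 1) + b ^ (p - 1) + (p - 1) * b ^ (p - 2) * |a|
        ≤ K1 * |a| * |a| ^ (p - 2) := by
      rw [hK1]
      linarith [h1, h2, h3']
    calc |max (b + a) 0 ^ (p - 1) - b ^ (p - 1) - (p - 1) * b ^ (p - 2) * a|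
        ≤ K1 * |a| * |a| ^ (p - 2) := habs.trans hK
      _ ≤ (K1 + K2) * |a| * (|a| ^ (p - 2) + b ^ (p - 2 - θ) * |a| ^ θ) := by
          linarith [mul_nonneg (mul_nonneg hK2pos.le haabs.le) hterm1,
            mul_nonneg (mul_nonneg (by linarith : (0:ℝ) ≤ K1 + K2) haabs.le) hterm2]
  · -- case |a| < b/2 : Taylor via two MVTs
    have hab : |a| < b := by linarith
    have hba : 0 < b + a := by have := neg_abs_le a; linarith
    have hmax : max (b + a) 0 = b + a := max_eq_left hba.le
    have hne : b ≠ b + a := fun h => ha0 (by linarith [h.symm.le, h.le])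
    obtain ⟨ξ, hξ1, hξ2, hξeq⟩ := rpow_mvt' (q := p - 1) hb hba hne
    rw [show p - 1 - 1 = p - 2 by ring] at hξeq
    have hξlo : b / 2 < ξ := by
      rcases le_or_gt b (b + a) with h | h
      · rw [min_eq_left h] at hξ1; linarith
      · rw [min_eq_right h.le] at hξ1; have := neg_abs_le a; linarith
    have hξhi : ξ < 2 * b := by
      rcases le_or_gt b (b + a) with h | h
      · rw [max_eq_right h] at hξ2; have := le_abs_self a; linarith
      · rw [max_eq_left h.le] at hξ2; linarith
    have hξpos : 0 < ξ := by linarith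
    have hξb : ξ ≠ b := by
      rcases lt_or_gt_of_ne (fun h => hne h.symm : b + a ≠ b) with h | h
      · have h2' := hξ2; rw [max_eq_left h.le] at h2'; exact ne_of_lt h2'
      · have h1' := hξ1; rw [min_eq_left h.le] at h1'; exact ne_of_gt h1'
    have hξbabs : |ξ - b| ≤ |a| := by
      rcases le_or_gt b (b + a) with h | h
      · have h1' := hξ1; have h2' := hξ2
        rw [min_eq_left h] at h1'; rw [max_eq_right h] at h2'
        have := le_abs_self a
        rw [abs_le]; constructor <;> linarith
      · have h1' := hξ1; have h2' := hξ2
        rw [min_eq_right h.le] at h1'; rw [max_eq_left h.le] at h2'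
        have := neg_abs_le a
        rw [abs_le]; constructor <;> linarith
    obtain ⟨η, hη1, hη2, hηeq⟩ := rpow_mvt' (q := p - 2) hb hξpos hξb.symm
    rw [show p - 2 - 1 = p - 3 by ring] at hηeq
    have hηlo : b / 2 < η := by
      rcases le_or_gt b ξ with h | h
      · rw [min_eq_left h] at hη1; linarith
      · rw [min_eq_right h.le] at hη1; linarith
    have hηhi : η < 2 * b := by
      rcases le_or_gt b ξ with h | h
      · rw [max_eq_right h] at hη2; linarith
      · rw [max_eq_left h.le] at hη2; linarith
    have hηpos : 0 < η := by linarith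
    have hbp3 : (0:ℝ) < b ^ (p - 3) := rpow_pos_of_pos hb _
    have hηbound : η ^ (p - 3) ≤ (2 ^ (p - 3) + 2 ^ (3 - p)) * b ^ (p - 3) := by
      rcases le_or_gt 3 p with h3p | h3p
      · have h := rpow_le_rpow hηpos.le hηhi.le (by linarith : (0:ℝ) ≤ p - 3)
        rw [mul_rpow (by norm_num) hb.le] at h
        have h2 : (0:ℝ) < (2:ℝ) ^ (3 - p) := rpow_pos_of_pos (by norm_num) _
        linarith [mul_pos h2 hbp3]
      · have h : η ^ (p - 3) ≤ (b / 2) ^ (p - 3) :=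
          rpow_le_rpow_of_nonpos (by linarith) hηlo.le (by linarith)
        have heq : (b / 2) ^ (p - 3) = 2 ^ (3 - p) * b ^ (p - 3) := by
          rw [div_rpow hb.le (by norm_num), div_eq_mul_inv,
            ← rpow_neg (by norm_num : (0:ℝ) ≤ 2), show -(p - 3) = 3 - p by ring]
          ring
        have h2 : (0:ℝ) < (2:ℝ) ^ (p - 3) := rpow_pos_of_pos (by norm_num) _
        rw [heq] at h
        linarith [mul_pos h2 hbp3]
    -- assemble
    have key : max (b + a) 0 ^ (p - 1) - b ^ (p - 1) - (p - 1) * b ^ (p - 2) * a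
        = (p - 1) * ((p - 2) * η ^ (p - 3) * (ξ - b)) * a := by
      rw [hmax]
      linear_combination hξeq + (p - 1) * a * hηeq
    have hstep : |max (b + a) 0 ^ (p - 1) - b ^ (p - 1) - (p - 1) * b ^ (p - 2) * a|
        ≤ K2 * (b ^ (p - 3) * (|a| * |a|)) := by
      have e : |max (b + a) 0 ^ (p - 1) - b ^ (p - 1) - (p - 1) * b ^ (p - 2) * a|
          = (p - 1) * (p - 2) * (η ^ (p - 3) * (|ξ - b| * |a|)) := by
        rw [key, abs_mul, abs_mul, abs_mul, abs_mul, abs_of_pos hp1, abs_of_pos hp2,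
          abs_of_pos (rpow_pos_of_pos hηpos _)]
        ring
      rw [e, hK2]
      have hb1 : η ^ (p - 3) * (|ξ - b| * |a|)
          ≤ ((2 ^ (p - 3) + 2 ^ (3 - p)) * b ^ (p - 3)) * (|a| * |a|) :=
        mul_le_mul hηbound (mul_le_mul_of_nonneg_right hξbabs (abs_nonneg a))
          (by positivity) (by positivity)
      calc (p - 1) * (p - 2) * (η ^ (p - 3) * (|ξ - b| * |a|))
          ≤ (p - 1) * (p - 2) * (((2 ^ (p - 3) + 2 ^ (3 - p)) * b ^ (p - 3)) * (|a| * |a|)) :=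
            mul_le_mul_of_nonneg_left hb1 (by positivity)
        _ = (p - 1) * (p - 2) * (2 ^ (p - 3) + 2 ^ (3 - p)) * (b ^ (p - 3) * (|a| * |a|)) := by
            ring
    have hfinal : b ^ (p - 3) * (|a| * |a|) ≤ |a| * (b ^ (p - 2 - θ) * |a| ^ θ) := by
      have h1 : |a| = |a| ^ θ * |a| ^ (1 - θ) := by
        rw [← rpow_add haabs, ← rpow_one |a|]; norm_num
      have h2 : |a| ^ (1 - θ) ≤ b ^ (1 - θ) :=
        rpow_le_rpow (abs_nonneg a) hab.le (by linarith)
      have h3 : b ^ (p - 3) * b ^ (1 - θ) = b ^ (p - 2 - θ) := by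
        rw [← rpow_add hb]; ring_nf
      calc b ^ (p - 3) * (|a| * |a|)
          = b ^ (p - 3) * |a| ^ (1 - θ) * (|a| * |a| ^ θ) := by
            nth_rewrite 2 [h1]; ring
        _ ≤ b ^ (p - 3) * b ^ (1 - θ) * (|a| * |a| ^ θ) := by
            have hnn : (0:ℝ) ≤ |a| * |a| ^ θ := by positivity
            exact mul_le_mul_of_nonneg_right
              (mul_le_mul_of_nonneg_left h2 hbp3.le) hnn
        _ = |a| * (b ^ (p - 2 - θ) * |a| ^ θ) := by rw [h3]; ring
    calc |max (b + a) 0 ^ (p - 1) - b ^ (p - 1) - (p - 1) * b ^ (p - 2) * a|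
        ≤ K2 * (b ^ (p - 3) * (|a| * |a|)) := hstep
      _ ≤ K2 * (|a| * (b ^ (p - 2 - θ) * |a| ^ θ)) :=
          mul_le_mul_of_nonneg_left hfinal hK2pos.le
      _ ≤ (K1 + K2) * |a| * (|a| ^ (p - 2) + b ^ (p - 2 - θ) * |a| ^ θ) := by
          linarith [mul_nonneg (mul_nonneg (by linarith : (0:ℝ) ≤ K1 + K2) haabs.le) hterm1,
            mul_nonneg (mul_nonneg hK1pos.le haabs.le) hterm2]
end

section
/- Let p > 2 be a real number. There exist a constant C > 0 and an exponent θ with 0 < θ < min(1, p−2) such that for all b > 0 and a₁, a₂ ∈ ℝ: |max(b+a₁,0)^{p-1} − max(b+a₂,0)^{p-1} − (p−1)b^{p-2}(a₁−a₂)| ≤ C·|a₁−a₂|·(b^{p-2-θ}|a₁|^{θ} + |a₁|^{p-2} + b^{p-2-θ}|a₂|^{θ} + |a₂|^{p-2}). -/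
set_option maxHeartbeats 1000000

open Real

-- MVT-type lemma: for r ≥ 1, x ↦ x^r is (r M^{r-1})-Lipschitz on [0,M]
lemma aux_lip {r : ℝ} (hr : 1 ≤ r) {M x y : ℝ} (hx : x ∈ Set.Icc (0:ℝ) M)
    (hy : y ∈ Set.Icc (0:ℝ) M) :
    |x ^ r - y ^ r| ≤ r * M ^ (r - 1) * |x - y| := by
  have hM : 0 ≤ M := hx.1.trans hx.2
  have key : ∀ t ∈ Set.Icc (0:ℝ) M,
      HasDerivWithinAt (fun s : ℝ => s ^ r) (r * t ^ (r - 1)) (Set.Icc 0 M) t := by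
    intro t ht
    exact (Real.hasDerivAt_rpow_const (Or.inr hr)).hasDerivWithinAt
  have bound : ∀ t ∈ Set.Icc (0:ℝ) M, ‖r * t ^ (r - 1)‖ ≤ r * M ^ (r - 1) := by
    intro t ht
    rw [Real.norm_eq_abs, abs_mul, abs_of_nonneg (by linarith : (0:ℝ) ≤ r),
      abs_of_nonneg (Real.rpow_nonneg ht.1 _)]
    exact mul_le_mul_of_nonneg_left
      (Real.rpow_le_rpow ht.1 ht.2 (by linarith)) (by linarith)
  have := (convex_Icc (0:ℝ) M).norm_image_sub_le_of_norm_hasDerivWithin_le key bound hy hx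
  simpa [Real.norm_eq_abs] using this

-- Hölder lemma for small exponent
lemma aux_holder {r : ℝ} (hr0 : 0 ≤ r) (hr1 : r ≤ 1) {x y : ℝ} (hx : 0 ≤ x) (hy : 0 ≤ y) :
    |x ^ r - y ^ r| ≤ |x - y| ^ r := by
  wlog h : y ≤ x generalizing x y
  · rw [abs_sub_comm, abs_sub_comm x y]; exact this hy hx (le_of_not_ge h)
  have h1 : x ^ r ≤ y ^ r + (x - y) ^ r := by
    have := NNReal.rpow_add_le_add_rpow (y.toNNReal) ((x - y).toNNReal) hr0 hr1
    have hcast : ((y.toNNReal + (x - y).toNNReal : NNReal) : ℝ) = x := by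
      push_cast [Real.coe_toNNReal _ hy, Real.coe_toNNReal _ (by linarith : (0:ℝ) ≤ x - y)]
      ring
    calc x ^ r = ((y.toNNReal + (x-y).toNNReal : NNReal) : ℝ) ^ r := by rw [hcast]
    _ = (((y.toNNReal + (x-y).toNNReal) ^ r : NNReal) : ℝ) := by
        rw [NNReal.coe_rpow]
    _ ≤ ((y.toNNReal ^ r + (x-y).toNNReal ^ r : NNReal) : ℝ) := by exact_mod_cast this
    _ = y ^ r + (x - y) ^ r := by
        push_cast [NNReal.coe_rpow, Real.coe_toNNReal _ hy,
          Real.coe_toNNReal _ (by linarith : (0:ℝ) ≤ x - y)]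
        ring
  have h2 : y ^ r ≤ x ^ r := Real.rpow_le_rpow hy h hr0
  rw [abs_of_nonneg (by linarith), abs_of_nonneg (by linarith : (0:ℝ) ≤ x - y)]
  linarith

lemma aux_scalar {r θ : ℝ} (hr : 0 < r) (hθdef : θ = min 1 r / 2) {b s : ℝ}
    (hb : 0 < b) (hs : 0 ≤ s) :
    |s ^ r - b ^ r| ≤ (r * 2 ^ r + 2 ^ r + 1) * (b ^ (r - θ) * |s - b| ^ θ + |s - b| ^ r) := by
  have hθ0 : 0 < θ := by rw [hθdef]; positivity
  have hθ1 : θ ≤ 1 := by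
    rw [hθdef]; have := min_le_left (1:ℝ) r; linarith
  have hθr : θ < r := by
    rw [hθdef]; have := min_le_right (1:ℝ) r; linarith
  set d := |s - b| with hd
  have hd0 : 0 ≤ d := abs_nonneg _
  have h2r : (1:ℝ) ≤ 2 ^ r := by
    calc (1:ℝ) = 2 ^ (0:ℝ) := by norm_num
    _ ≤ 2 ^ r := Real.rpow_le_rpow_of_exponent_le one_le_two hr.le
  have h2r0 : (0:ℝ) < 2 ^ r := by positivity
  have hC1 : (1:ℝ) ≤ r * 2 ^ r + 2 ^ r + 1 := by nlinarith
  have hterm1 : 0 ≤ b ^ (r - θ) * d ^ θ := by positivity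
  have hterm2 : 0 ≤ d ^ r := Real.rpow_nonneg hd0 _
  by_cases hcase : d ≤ b
  · -- near case
    have hsle : s ≤ 2 * b := by
      have : s - b ≤ d := le_abs_self _
      linarith
    by_cases hr1 : r ≤ 1
    · -- small exponent
      have h1 : |s ^ r - b ^ r| ≤ d ^ r := aux_holder hr.le hr1 hs hb.le
      have h2 : d ^ r = d ^ (r - θ) * d ^ θ := by
        rw [← Real.rpow_add' hd0 (by linarith : r - θ + θ ≠ 0)]; ring_nf
      have h3 : d ^ (r - θ) ≤ b ^ (r - θ) := Real.rpow_le_rpow hd0 hcase (by linarith)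
      have h4 : d ^ r ≤ b ^ (r - θ) * d ^ θ := by
        rw [h2]
        exact mul_le_mul_of_nonneg_right h3 (Real.rpow_nonneg hd0 _)
      nlinarith [Real.rpow_nonneg hd0 θ]
    · -- large exponent
      push_neg at hr1
      have h1 : |s ^ r - b ^ r| ≤ r * (2 * b) ^ (r - 1) * d :=
        aux_lip hr1.le ⟨hs, hsle⟩ ⟨hb.le, by linarith⟩
      have h2 : (2 * b) ^ (r - 1) = 2 ^ (r - 1) * b ^ (r - 1) :=
        Real.mul_rpow (by norm_num) hb.le
      have h3 : (2:ℝ) ^ (r - 1) ≤ 2 ^ r :=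
        Real.rpow_le_rpow_of_exponent_le one_le_two (by linarith)
      have h4 : d ≤ d ^ θ * b ^ (1 - θ) := by
        have heq : d = d ^ θ * d ^ (1 - θ) := by
          rw [← Real.rpow_add' hd0 (by norm_num : θ + (1 - θ) ≠ 0),
            show θ + (1 - θ) = (1:ℝ) by ring, Real.rpow_one]
        have h4a : d ^ (1 - θ) ≤ b ^ (1 - θ) :=
          Real.rpow_le_rpow hd0 hcase (by linarith)
        calc d = d ^ θ * d ^ (1 - θ) := heq
        _ ≤ d ^ θ * b ^ (1 - θ) :=
            mul_le_mul_of_nonneg_left h4a (Real.rpow_nonneg hd0 _)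
      have h5 : b ^ (r - 1) * (d ^ θ * b ^ (1 - θ)) = b ^ (r - θ) * d ^ θ := by
        rw [mul_comm (d ^ θ) (b ^ (1 - θ)), ← mul_assoc, ← Real.rpow_add hb,
          show r - 1 + (1 - θ) = r - θ by ring]
      have h6 : r * (2 * b) ^ (r - 1) * d ≤ r * 2 ^ r * (b ^ (r - θ) * d ^ θ) := by
        rw [h2]
        have hb1 : (0:ℝ) ≤ b ^ (r - 1) := Real.rpow_nonneg hb.le _
        have h7 : b ^ (r - 1) * d ≤ b ^ (r - θ) * d ^ θ := by
          calc b ^ (r - 1) * d ≤ b ^ (r - 1) * (d ^ θ * b ^ (1 - θ)) :=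
                mul_le_mul_of_nonneg_left h4 hb1
          _ = b ^ (r - θ) * d ^ θ := h5
        have h8 : (2:ℝ) ^ (r - 1) * (b ^ (r - 1) * d) ≤ 2 ^ r * (b ^ (r - θ) * d ^ θ) :=
          mul_le_mul h3 h7 (by positivity) (by positivity)
        nlinarith [hr.le]
      nlinarith
  · -- far case : b < d
    push_neg at hcase
    have hsd : s ≤ 2 * d := by
      have : s - b ≤ d := le_abs_self _
      linarith
    have h1 : s ^ r ≤ 2 ^ r * d ^ r := by
      calc s ^ r ≤ (2 * d) ^ r := Real.rpow_le_rpow hs hsd hr.le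
      _ = 2 ^ r * d ^ r := Real.mul_rpow (by norm_num) hd0
    have h2 : b ^ r ≤ d ^ r := Real.rpow_le_rpow hb.le hcase.le hr.le
    have h3 : |s ^ r - b ^ r| ≤ s ^ r + b ^ r := by
      have := abs_sub (s ^ r) (b ^ r)
      rw [abs_sub_comm] at *
      have hs' : 0 ≤ s ^ r := Real.rpow_nonneg hs _
      have hb' : 0 ≤ b ^ r := Real.rpow_nonneg hb.le _
      rw [abs_sub_le_iff]
      constructor <;> linarith
    nlinarith [mul_nonneg (mul_nonneg hr.le h2r0.le) hterm2,
      mul_nonneg (by nlinarith : (0:ℝ) ≤ r * 2 ^ r + 2 ^ r + 1) hterm1]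

theorem pointwise_estimate_two (p : ℝ) (hp : 2 < p) :
    ∃ C > (0 : ℝ), ∃ θ : ℝ, 0 < θ ∧ θ < min 1 (p - 2) ∧
      ∀ b : ℝ, 0 < b → ∀ a₁ a₂ : ℝ,
        |max (b + a₁) 0 ^ (p - 1) - max (b + a₂) 0 ^ (p - 1)
            - (p - 1) * b ^ (p - 2) * (a₁ - a₂)|
          ≤ C * |a₁ - a₂| *
              (b ^ (p - 2 - θ) * |a₁| ^ θ + |a₁| ^ (p - 2)
                + b ^ (p - 2 - θ) * |a₂| ^ θ + |a₂| ^ (p - 2)) := by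
  set r : ℝ := p - 2 with hrdef
  set q : ℝ := p - 1 with hqdef
  have hr : 0 < r := by simp [hrdef]; linarith
  have hq : 1 < q := by simp [hqdef]; linarith
  set θ : ℝ := min 1 r / 2 with hθdef
  have hmin : 0 < min 1 r := lt_min one_pos hr
  have hθ0 : 0 < θ := by positivity
  have hθ1 : θ ≤ 1 := by
    have := min_le_left (1:ℝ) r; rw [hθdef]; linarith
  have hθr : θ < r := by
    have := min_le_right (1:ℝ) r; rw [hθdef]; linarith
  set C₁ : ℝ := r * 2 ^ r + 2 ^ r + 1 with hC₁def
  have h2r0 : (0:ℝ) < 2 ^ r := by positivity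
  have hC₁ : 0 < C₁ := by rw [hC₁def]; nlinarith
  refine ⟨q * C₁ + 2 * q, by nlinarith, θ, hθ0, half_lt_self hmin, ?_⟩
  intro b hb a₁ a₂
  set x := max (b + a₁) 0 with hxdef
  set y := max (b + a₂) 0 with hydef
  have hx : 0 ≤ x := le_max_right _ _
  have hy : 0 ≤ y := le_max_right _ _
  -- |x - b| ≤ |a₁|, |y - b| ≤ |a₂|
  have hclose : ∀ a : ℝ, |max (b + a) 0 - b| ≤ |a| := by
    intro a
    rcases le_or_gt 0 (b + a) with h | h
    · rw [max_eq_left h, show b + a - b = a by ring]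
    · rw [max_eq_right h.le, zero_sub, abs_neg, abs_of_pos hb]
      have : -a > b := by linarith
      calc b ≤ -a := this.le
      _ ≤ |a| := neg_le_abs a
  have hxb : |x - b| ≤ |a₁| := hclose a₁
  have hyb : |y - b| ≤ |a₂| := hclose a₂
  have hxy : |x - y| ≤ |a₁ - a₂| := by
    have := abs_max_sub_max_le_abs (b + a₁) (b + a₂) 0
    simpa [show b + a₁ - (b + a₂) = a₁ - a₂ by ring] using this
  -- MVT on g t = t ^ q - q * b ^ r * t over S
  set S := Set.Icc (min x y) (max x y) with hSdef
  have hconv : Convex ℝ S := convex_Icc _ _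
  have hmem : ∀ t ∈ S, 0 ≤ t ∧ |t - b| ≤ max |x - b| |y - b| := by
    intro t ht
    obtain ⟨ht1, ht2⟩ := ht
    have h0t : 0 ≤ t := le_trans (le_min hx hy) ht1
    refine ⟨h0t, abs_le.mpr ⟨?_, ?_⟩⟩
    · rcases le_total x y with h | h
      · rw [min_eq_left h] at ht1
        have := neg_abs_le (x - b)
        have := le_max_left |x - b| |y - b|
        linarith
      · rw [min_eq_right h] at ht1
        have := neg_abs_le (y - b)
        have := le_max_right |x - b| |y - b|
        linarith
    · rcases le_total x y with h | h
      · rw [max_eq_right h] at ht2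
        have := le_abs_self (y - b)
        have := le_max_right |x - b| |y - b|
        linarith
      · rw [max_eq_left h] at ht2
        have := le_abs_self (x - b)
        have := le_max_left |x - b| |y - b|
        linarith
  set K : ℝ := q * (C₁ * (b ^ (r - θ) * (|a₁| ^ θ + |a₂| ^ θ) + |a₁| ^ r + |a₂| ^ r))
    with hKdef
  have hK0 : 0 ≤ K := by positivity
  have hbound : ∀ t ∈ S, ‖q * t ^ (q - 1) - q * b ^ (q - 1)‖ ≤ K := by
    intro t ht
    obtain ⟨h0t, htb⟩ := hmem t ht
    have hsc := aux_scalar hr hθdef hb h0t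
    have htransfer : ∀ e : ℝ, 0 < e → |t - b| ^ e ≤ |a₁| ^ e + |a₂| ^ e := by
      intro e he
      have h1 : |t - b| ≤ max |a₁| |a₂| := by
        refine htb.trans (max_le_max hxb hyb)
      calc |t - b| ^ e ≤ (max |a₁| |a₂|) ^ e :=
            Real.rpow_le_rpow (abs_nonneg _) h1 he.le
      _ ≤ |a₁| ^ e + |a₂| ^ e := by
          rcases max_cases |a₁| |a₂| with ⟨hm, _⟩ | ⟨hm, _⟩ <;> rw [hm]
          · nlinarith [Real.rpow_nonneg (abs_nonneg a₂) e]
          · nlinarith [Real.rpow_nonneg (abs_nonneg a₁) e]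
    have hθtr := htransfer θ hθ0
    have hrtr := htransfer r hr
    have hbrθ : 0 ≤ b ^ (r - θ) := Real.rpow_nonneg hb.le _
    have h2 : |t ^ r - b ^ r| ≤ C₁ * (b ^ (r - θ) * (|a₁| ^ θ + |a₂| ^ θ)
        + |a₁| ^ r + |a₂| ^ r) := by
      rw [← hC₁def] at hsc
      refine hsc.trans ?_
      have hprod := mul_le_mul_of_nonneg_left hθtr hbrθ
      have : b ^ (r - θ) * |t - b| ^ θ + |t - b| ^ r ≤
          b ^ (r - θ) * (|a₁| ^ θ + |a₂| ^ θ) + (|a₁| ^ r + |a₂| ^ r) := by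
        linarith
      linarith [mul_le_mul_of_nonneg_left this hC₁.le]
    have hq1 : q - 1 = r := by rw [hqdef, hrdef]; ring
    rw [show q * t ^ (q - 1) - q * b ^ (q - 1) = q * (t ^ (q-1) - b ^ (q-1)) by ring,
      hq1, Real.norm_eq_abs, abs_mul, abs_of_pos (by linarith : (0:ℝ) < q), hKdef]
    exact mul_le_mul_of_nonneg_left h2 (by linarith)
  have hderiv : ∀ t ∈ S, HasDerivWithinAt (fun s : ℝ => s ^ q - q * b ^ (q - 1) * s)
      (q * t ^ (q - 1) - q * b ^ (q - 1)) S t := by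
    intro t ht
    have h1 : HasDerivAt (fun s : ℝ => s ^ q) (q * t ^ (q - 1)) t :=
      Real.hasDerivAt_rpow_const (Or.inr hq.le)
    have h2 : HasDerivAt (fun s : ℝ => q * b ^ (q - 1) * s) (q * b ^ (q - 1)) t := by
      simpa using (hasDerivAt_id t).const_mul (q * b ^ (q - 1))
    exact (h1.sub h2).hasDerivWithinAt
  have hmvt := hconv.norm_image_sub_le_of_norm_hasDerivWithin_le hderiv hbound
    (Set.mem_Icc.mpr ⟨min_le_right x y, le_max_right x y⟩)
    (Set.mem_Icc.mpr ⟨min_le_left x y, le_max_left x y⟩)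
  rw [Real.norm_eq_abs, Real.norm_eq_abs] at hmvt
  -- hmvt : |(x^q - q b^{q-1} x) - (y^q - q b^{q-1} y)| ≤ K * |x - y|
  have hg : |x ^ q - y ^ q - q * b ^ (q - 1) * (x - y)| ≤ K * |a₁ - a₂| := by
    calc |x ^ q - y ^ q - q * b ^ (q - 1) * (x - y)|
        = |x ^ q - q * b ^ (q - 1) * x - (y ^ q - q * b ^ (q - 1) * y)| := by ring_nf
    _ ≤ K * |x - y| := hmvt
    _ ≤ K * |a₁ - a₂| := mul_le_mul_of_nonneg_left hxy hK0
  -- truncation error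
  have hE : q * b ^ (q - 1) * |x - y - (a₁ - a₂)| ≤
      2 * q * (|a₁| ^ r + |a₂| ^ r) * |a₁ - a₂| := by
    have hq0 : (0:ℝ) < q := by linarith
    by_cases hcase : 0 ≤ b + a₁ ∧ 0 ≤ b + a₂
    · have hx' : x = b + a₁ := max_eq_left hcase.1
      have hy' : y = b + a₂ := max_eq_left hcase.2
      rw [hx', hy', show b + a₁ - (b + a₂) - (a₁ - a₂) = 0 by ring, abs_zero, mul_zero]
      positivity
    · have hbr : b ^ r ≤ |a₁| ^ r + |a₂| ^ r := by
        rw [Decidable.not_and_iff_or_not] at hcase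
        rcases hcase with h | h
        · push_neg at h
          have hba : b ≤ |a₁| := by
            have : -a₁ > b := by linarith
            calc b ≤ -a₁ := this.le
            _ ≤ |a₁| := neg_le_abs a₁
          have := Real.rpow_le_rpow hb.le hba hr.le
          nlinarith [Real.rpow_nonneg (abs_nonneg a₂) r]
        · push_neg at h
          have hba : b ≤ |a₂| := by
            have : -a₂ > b := by linarith
            calc b ≤ -a₂ := this.le
            _ ≤ |a₂| := neg_le_abs a₂
          have := Real.rpow_le_rpow hb.le hba hr.le
          nlinarith [Real.rpow_nonneg (abs_nonneg a₁) r]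
      have hD : |x - y - (a₁ - a₂)| ≤ 2 * |a₁ - a₂| := by
        have := abs_sub (x - y) (a₁ - a₂)
        calc |x - y - (a₁ - a₂)| ≤ |x - y| + |a₁ - a₂| := abs_sub _ _
        _ ≤ 2 * |a₁ - a₂| := by linarith
      have hq1 : q - 1 = r := by rw [hqdef, hrdef]; ring
      rw [hq1]
      have h1 : b ^ r * |x - y - (a₁ - a₂)| ≤
          (|a₁| ^ r + |a₂| ^ r) * (2 * |a₁ - a₂|) :=
        mul_le_mul hbr hD (abs_nonneg _)
          (by positivity)
      calc q * b ^ r * |x - y - (a₁ - a₂)| = q * (b ^ r * |x - y - (a₁ - a₂)|) := by ring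
      _ ≤ q * ((|a₁| ^ r + |a₂| ^ r) * (2 * |a₁ - a₂|)) :=
          mul_le_mul_of_nonneg_left h1 hq0.le
      _ = 2 * q * (|a₁| ^ r + |a₂| ^ r) * |a₁ - a₂| := by ring
  -- assemble
  have hq1 : q - 1 = r := by rw [hqdef, hrdef]; ring
  have hsplit : |x ^ q - y ^ q - q * b ^ r * (a₁ - a₂)| ≤
      K * |a₁ - a₂| + 2 * q * (|a₁| ^ r + |a₂| ^ r) * |a₁ - a₂| := by
    rw [hq1] at hg hE
    calc |x ^ q - y ^ q - q * b ^ r * (a₁ - a₂)|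
        = |(x ^ q - y ^ q - q * b ^ r * (x - y))
            + q * b ^ r * (x - y - (a₁ - a₂))| := by ring_nf
    _ ≤ |x ^ q - y ^ q - q * b ^ r * (x - y)|
          + |q * b ^ r * (x - y - (a₁ - a₂))| := abs_add_le _ _
    _ ≤ K * |a₁ - a₂| + 2 * q * (|a₁| ^ r + |a₂| ^ r) * |a₁ - a₂| := by
        rw [abs_mul, abs_of_nonneg (by positivity : (0:ℝ) ≤ q * b ^ r)]
        exact add_le_add hg hE
  have hfinal : K * |a₁ - a₂| + 2 * q * (|a₁| ^ r + |a₂| ^ r) * |a₁ - a₂| ≤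
      (q * C₁ + 2 * q) * |a₁ - a₂| *
        (b ^ (r - θ) * |a₁| ^ θ + |a₁| ^ r + b ^ (r - θ) * |a₂| ^ θ + |a₂| ^ r) := by
    have t1 : 0 ≤ b ^ (r - θ) * |a₁| ^ θ := by positivity
    have t2 : 0 ≤ |a₁| ^ r := Real.rpow_nonneg (abs_nonneg _) _
    have t3 : 0 ≤ b ^ (r - θ) * |a₂| ^ θ := by positivity
    have t4 : 0 ≤ |a₂| ^ r := Real.rpow_nonneg (abs_nonneg _) _
    have hΔ : 0 ≤ |a₁ - a₂| := abs_nonneg _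
    have hKeq : K * |a₁ - a₂| = q * C₁ * |a₁ - a₂| *
        (b ^ (r - θ) * |a₁| ^ θ + |a₁| ^ r + b ^ (r - θ) * |a₂| ^ θ + |a₂| ^ r) := by
      rw [hKdef]; ring
    rw [hKeq]
    nlinarith [mul_nonneg (mul_nonneg (by linarith : (0:ℝ) ≤ 2*q) hΔ) (add_nonneg t1 t3),
      mul_nonneg hΔ (add_nonneg t1 t3)]
  calc |max (b + a₁) 0 ^ (p - 1) - max (b + a₂) 0 ^ (p - 1) - (p-1) * b ^ (p-2) * (a₁ - a₂)|
      = |x ^ q - y ^ q - q * b ^ r * (a₁ - a₂)| := by rw [hxdef, hydef, hqdef, hrdef]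
  _ ≤ K * |a₁ - a₂| + 2 * q * (|a₁| ^ r + |a₂| ^ r) * |a₁ - a₂| := hsplit
  _ ≤ (q * C₁ + 2 * q) * |a₁ - a₂| *
        (b ^ (r - θ) * |a₁| ^ θ + |a₁| ^ r + b ^ (r - θ) * |a₂| ^ θ + |a₂| ^ r) := hfinal
  _ = (q * C₁ + 2 * q) * |a₁ - a₂| *
        (b ^ (p - 2 - θ) * |a₁| ^ θ + |a₁| ^ (p-2) + b ^ (p-2-θ) * |a₂| ^ θ + |a₂| ^ (p-2)) := by
      rw [hrdef]
end

section
/- Let n > 2k, γ ∈ (0, n), β ∈ (0, n], with β < γ, and μ > 0. There exists C > 0, independent of μ, such that for all x ∈ ℝⁿ: ∫_{ℝⁿ, |z−x| ≤ 1} (μ + |x−z|)^{-γ} |z − y|^{β−n} dz ≤ C (μ + |x−y|)^{β−γ} for all y with |x−y| ≤ 1/2, when γ < n (the subcritical case of Giraud's lemma with μ-regularized kernel). -/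
noncomputable section

open MeasureTheory Measure Metric Set
open scoped ENNReal

namespace GiraudAux

/-- lintegral version of `integral_fun_norm_addHaar`. -/
lemma lintegral_fun_norm_addHaar {E : Type*} [NormedAddCommGroup E] [NormedSpace ℝ E]
    [MeasurableSpace E] [BorelSpace E] [FiniteDimensional ℝ E] [Nontrivial E]
    (μ : Measure E) [μ.IsAddHaarMeasure] {f : ℝ → ℝ≥0∞} (hf : Measurable f) :
    ∫⁻ x, f ‖x‖ ∂μ = (Module.finrank ℝ E) * μ (ball 0 1) *
      ∫⁻ r in Ioi (0:ℝ), ENNReal.ofReal (r ^ (Module.finrank ℝ E - 1)) * f r := by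
  calc
    ∫⁻ x, f ‖x‖ ∂μ = ∫⁻ x : ({(0:E)}ᶜ : Set E), f ‖x.1‖ ∂(μ.comap (↑)) := by
      rw [lintegral_subtype_comap (measurableSet_singleton _).compl fun x ↦ f ‖x‖,
        MeasureTheory.restrict_compl_singleton]
    _ = ∫⁻ p : sphere (0:E) 1 × Ioi (0:ℝ), f p.2
        ∂(μ.toSphere.prod (volumeIoiPow (Module.finrank ℝ E - 1))) := by
      have := (μ.measurePreserving_homeomorphUnitSphereProd).lintegral_comp
        (hf.comp (measurable_subtype_coe.comp measurable_snd))
      simpa only [Function.comp_def, homeomorphUnitSphereProd_apply_snd_coe] using this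
    _ = μ.toSphere univ * ∫⁻ r : Ioi (0:ℝ), f r ∂(volumeIoiPow (Module.finrank ℝ E - 1)) := by
      rw [lintegral_prod (fun p : sphere (0:E) 1 × Ioi (0:ℝ) => f p.2)
        ((hf.comp (measurable_subtype_coe.comp measurable_snd)).aemeasurable)]
      simp [lintegral_const, mul_comm]
    _ = _ := by
      rw [Measure.toSphere_apply_univ]
      congr 1
      rw [Measure.volumeIoiPow, lintegral_withDensity_eq_lintegral_mul _
          ((measurable_subtype_coe.pow_const _).ennreal_ofReal)
          (g := fun r => f r.1) (hf.comp measurable_subtype_coe)]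
      have := lintegral_subtype_comap (μ := (volume : Measure ℝ)) (measurableSet_Ioi (a := (0:ℝ)))
        (fun r : ℝ => ENNReal.ofReal (r ^ (Module.finrank ℝ E - 1)) * f r)
      rw [← this]
      rfl


lemma lintegral_Ioc_rpow {s R : ℝ} (hs : 0 < s) (hR : 0 ≤ R) :
    ∫⁻ r in Ioc (0:ℝ) R, ENNReal.ofReal (r ^ (s - 1)) = ENNReal.ofReal (R ^ s / s) := by
  rw [← ofReal_integral_eq_lintegral_ofReal ((intervalIntegral.intervalIntegrable_rpow'
      (by linarith : (-1:ℝ) < s - 1)).1)]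
  · congr 1
    rw [← intervalIntegral.integral_of_le hR,
      integral_rpow (Or.inl (by linarith : (-1:ℝ) < s - 1))]
    rw [sub_add_cancel, Real.zero_rpow hs.ne']
    ring
  · filter_upwards [ae_restrict_mem measurableSet_Ioc] with r hr
    exact Real.rpow_nonneg hr.1.le _

lemma lintegral_Ioi_rpow {a d : ℝ} (ha : a < -1) (hd : 0 < d) :
    ∫⁻ r in Ioi d, ENNReal.ofReal (r ^ a) = ENNReal.ofReal (d ^ (a + 1) / (-(a + 1))) := by
  rw [← ofReal_integral_eq_lintegral_ofReal (integrableOn_Ioi_rpow_of_lt ha hd)]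
  · rw [integral_Ioi_rpow_of_lt ha hd]
    rw [neg_div, ← div_neg]
  · filter_upwards [ae_restrict_mem measurableSet_Ioi] with r hr
    exact Real.rpow_nonneg (hd.trans hr).le _


lemma radial_formula {n : ℕ} (hn : 0 < n) {f : ℝ → ℝ≥0∞} (hf : Measurable f) :
    ∫⁻ x : EuclideanSpace ℝ (Fin n), f ‖x‖ =
      n * volume (ball (0 : EuclideanSpace ℝ (Fin n)) 1) *
        ∫⁻ r in Ioi (0:ℝ), ENNReal.ofReal (r ^ (n - 1)) * f r := by
  haveI : Nonempty (Fin n) := Fin.pos_iff_nonempty.mp hn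
  have h := lintegral_fun_norm_addHaar (volume : Measure (EuclideanSpace ℝ (Fin n))) hf
  simpa [finrank_euclideanSpace_fin] using h

lemma lintegral_closedBall_rpow {n : ℕ} (hn : 0 < n) {s R : ℝ} (hs : 0 < s) (hR : 0 < R) :
    ∫⁻ w in closedBall (0 : EuclideanSpace ℝ (Fin n)) R,
        ENNReal.ofReal (‖w‖ ^ (s - n)) =
      n * volume (ball (0 : EuclideanSpace ℝ (Fin n)) 1) * ENNReal.ofReal (R ^ s / s) := by
  set f : ℝ → ℝ≥0∞ := fun r => if r ≤ R then ENNReal.ofReal (r ^ (s - n)) else 0 with hfdef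
  have hfm : Measurable f := Measurable.ite (measurableSet_le measurable_id measurable_const)
    (by fun_prop) measurable_const
  have h1 : ∫⁻ w in closedBall (0 : EuclideanSpace ℝ (Fin n)) R,
      ENNReal.ofReal (‖w‖ ^ (s - n)) = ∫⁻ w : EuclideanSpace ℝ (Fin n), f ‖w‖ := by
    rw [← lintegral_indicator measurableSet_closedBall]
    congr 1; ext w
    rw [hfdef]
    by_cases hw : ‖w‖ ≤ R
    · rw [indicator_of_mem (by simpa [mem_closedBall, dist_zero_right] using hw)]
      simp [hw]
    · rw [indicator_of_notMem (by simpa [mem_closedBall, dist_zero_right] using hw)]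
      simp [hw]
  rw [h1, radial_formula hn hfm]
  congr 1
  rw [← Ioc_union_Ioi_eq_Ioi hR.le, lintegral_union measurableSet_Ioi (Ioc_disjoint_Ioi le_rfl)]
  have h2 : ∫⁻ r in Ioi R, ENNReal.ofReal (r ^ (n-1)) * f r = 0 := by
    have h0 := setLIntegral_congr_fun (f := fun r => ENNReal.ofReal (r ^ (n-1)) * f r)
      (g := fun _ => (0:ℝ≥0∞)) (μ := volume) (s := Ioi R) measurableSet_Ioi
      (fun r hr => by simp [hfdef, not_le.mpr (mem_Ioi.mp hr)])
    rw [h0, lintegral_zero]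
  have h3 : ∫⁻ r in Ioc 0 R, ENNReal.ofReal (r ^ (n-1)) * f r
      = ∫⁻ r in Ioc 0 R, ENNReal.ofReal (r ^ (s-1)) := by
    apply setLIntegral_congr_fun measurableSet_Ioc (fun r hr => ?_)
    rw [hfdef]
    simp only [if_pos hr.2]
    rw [← ENNReal.ofReal_mul (pow_nonneg hr.1.le _)]
    congr 1
    rw [← Real.rpow_natCast r (n-1), ← Real.rpow_add hr.1]
    congr 1
    have hcast : ((n - 1 : ℕ) : ℝ) = (n:ℝ) - 1 := by
      rw [Nat.cast_sub hn, Nat.cast_one]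
    rw [hcast]; ring
  rw [h2, h3, add_zero, lintegral_Ioc_rpow hs hR.le]


lemma lintegral_riesz_tail {n : ℕ} {γ β d : ℝ} (hγ0 : 0 < γ) (hγn : γ < n) (hβγ : β < γ)
    (hd : 0 < d) :
    ∫⁻ w : EuclideanSpace ℝ (Fin n),
        ENNReal.ofReal (‖w‖ ^ (-γ)) * ENNReal.ofReal ((d + ‖w‖) ^ (β - n)) ≤
      n * volume (ball (0 : EuclideanSpace ℝ (Fin n)) 1) *
        ENNReal.ofReal ((1/(n - γ) + 1/(γ - β)) * d ^ (β - γ)) := by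
  have hn : 0 < n := by exact_mod_cast (lt_trans hγ0 hγn : (0:ℝ) < n)
  have hβn : β - (n:ℝ) ≤ 0 := by linarith
  set f : ℝ → ℝ≥0∞ := fun r => ENNReal.ofReal (r ^ (-γ)) * ENNReal.ofReal ((d + r) ^ (β - n))
    with hfdef
  have hfm : Measurable f := by fun_prop
  have h0 : ∫⁻ w : EuclideanSpace ℝ (Fin n), ENNReal.ofReal (‖w‖ ^ (-γ)) *
      ENNReal.ofReal ((d + ‖w‖) ^ (β - n)) = ∫⁻ w : EuclideanSpace ℝ (Fin n), f ‖w‖ := rfl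
  rw [h0, radial_formula hn hfm]
  refine mul_le_mul_right ?_ _
  rw [← Ioc_union_Ioi_eq_Ioi hd.le, lintegral_union measurableSet_Ioi (Ioc_disjoint_Ioi le_rfl)]
  have part1 : ∫⁻ r in Ioc 0 d, ENNReal.ofReal (r ^ (n-1)) * f r ≤
      ENNReal.ofReal (d ^ (β - γ) / (n - γ)) := by
    have hb : ∀ r ∈ Ioc (0:ℝ) d, ENNReal.ofReal (r ^ (n-1)) * f r ≤
        ENNReal.ofReal (d ^ (β - n)) * ENNReal.ofReal (r ^ ((n - γ) - 1)) := by
      intro r hr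
      have hr0 : (0:ℝ) < r := hr.1
      have e1 : ENNReal.ofReal (r ^ (n-1)) * ENNReal.ofReal (r ^ (-γ)) =
          ENNReal.ofReal (r ^ ((n - γ) - 1)) := by
        rw [← ENNReal.ofReal_mul (pow_nonneg hr0.le _)]
        congr 1
        rw [← Real.rpow_natCast r (n-1), ← Real.rpow_add hr0, Nat.cast_sub hn, Nat.cast_one]
        ring_nf
      calc ENNReal.ofReal (r ^ (n-1)) *
            (ENNReal.ofReal (r ^ (-γ)) * ENNReal.ofReal ((d + r) ^ (β - n)))
          = ENNReal.ofReal (r ^ ((n-γ)-1)) * ENNReal.ofReal ((d + r) ^ (β - n)) := by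
            rw [← mul_assoc, e1]
        _ ≤ ENNReal.ofReal (d ^ (β - n)) * ENNReal.ofReal (r ^ ((n - γ) - 1)) := by
            rw [mul_comm]
            exact mul_le_mul_left (ENNReal.ofReal_le_ofReal
              (Real.rpow_le_rpow_of_nonpos hd (le_add_of_nonneg_right hr0.le) hβn)) _
    calc ∫⁻ r in Ioc 0 d, ENNReal.ofReal (r^(n-1)) * f r
        ≤ ∫⁻ r in Ioc 0 d, ENNReal.ofReal (d ^ (β-n)) * ENNReal.ofReal (r ^ ((n-γ)-1)) :=
          setLIntegral_mono (by fun_prop) hb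
      _ = ENNReal.ofReal (d ^ (β-n)) * ENNReal.ofReal (d ^ (n-γ) / (n-γ)) := by
          rw [lintegral_const_mul _ (by fun_prop), lintegral_Ioc_rpow (by linarith) hd.le]
      _ = ENNReal.ofReal (d ^ (β-γ) / (n-γ)) := by
          rw [← ENNReal.ofReal_mul (Real.rpow_nonneg hd.le _)]
          congr 1
          rw [← mul_div_assoc, ← Real.rpow_add hd]
          ring_nf
  have part2 : ∫⁻ r in Ioi d, ENNReal.ofReal (r ^ (n-1)) * f r ≤
      ENNReal.ofReal (d ^ (β - γ) / (γ - β)) := by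
    have hb : ∀ r ∈ Ioi d, ENNReal.ofReal (r ^ (n-1)) * f r ≤
        ENNReal.ofReal (r ^ (β - γ - 1)) := by
      intro r hr
      have hr0 : (0:ℝ) < r := lt_trans hd (mem_Ioi.mp hr)
      calc ENNReal.ofReal (r ^ (n-1)) *
            (ENNReal.ofReal (r ^ (-γ)) * ENNReal.ofReal ((d + r) ^ (β - n)))
          ≤ ENNReal.ofReal (r ^ (n-1)) *
            (ENNReal.ofReal (r ^ (-γ)) * ENNReal.ofReal (r ^ (β - n))) := by
            refine mul_le_mul_right (mul_le_mul_right (ENNReal.ofReal_le_ofReal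
              (Real.rpow_le_rpow_of_nonpos hr0 (le_add_of_nonneg_left hd.le) hβn)) _) _
        _ = ENNReal.ofReal (r ^ (β - γ - 1)) := by
            rw [← ENNReal.ofReal_mul (Real.rpow_nonneg hr0.le _),
              ← ENNReal.ofReal_mul (pow_nonneg hr0.le _)]
            congr 1
            rw [← Real.rpow_natCast r (n-1), ← Real.rpow_add hr0, ← Real.rpow_add hr0,
              Nat.cast_sub hn, Nat.cast_one]
            ring_nf
    calc ∫⁻ r in Ioi d, ENNReal.ofReal (r^(n-1)) * f r
        ≤ ∫⁻ r in Ioi d, ENNReal.ofReal (r ^ (β - γ - 1)) :=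
          setLIntegral_mono (by fun_prop) hb
      _ ≤ ENNReal.ofReal (d ^ (β - γ) / (γ - β)) := by
          rw [lintegral_Ioi_rpow (by linarith) hd]
          apply ENNReal.ofReal_le_ofReal
          rw [show β - γ - 1 + 1 = β - γ by ring, show -(β - γ) = γ - β by ring]
  refine le_trans (add_le_add part1 part2) ?_
  rw [← ENNReal.ofReal_add (div_nonneg (Real.rpow_nonneg hd.le _) (by linarith))
    (div_nonneg (Real.rpow_nonneg hd.le _) (by linarith))]
  apply ENNReal.ofReal_le_ofReal
  have hne1 : (n:ℝ) - γ ≠ 0 := ne_of_gt (by linarith)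
  have hne2 : γ - β ≠ 0 := ne_of_gt (by linarith)
  apply le_of_eq
  field_simp

end GiraudAux

open MeasureTheory Real GiraudAux

/-- Giraud's lemma with `μ`-regularized kernel, local Euclidean model, subcritical case
`β < γ < n`. -/
theorem giraud_regularized_subcritical (n k : ℕ) (hk : 1 ≤ k) (hnk : 2 * k < n)
    (γ β : ℝ) (hγ : γ ∈ Set.Ioo (0 : ℝ) n) (hβ : β ∈ Set.Ioc (0 : ℝ) n) (hβγ : β < γ) :
    ∃ C > (0 : ℝ), ∀ μ : ℝ, 0 < μ →
      ∀ x y : EuclideanSpace ℝ (Fin n), ‖x - y‖ ≤ 1 / 2 →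
        (∫ z in Metric.closedBall x 1,
            (μ + ‖x - z‖) ^ (-γ) * ‖z - y‖ ^ (β - n))
          ≤ C * (μ + ‖x - y‖) ^ (β - γ) := by
  classical
  have hn : 0 < n := by omega
  obtain ⟨hγ0, hγn⟩ := hγ
  obtain ⟨hβ0, hβn⟩ := hβ
  haveI : Nonempty (Fin n) := Fin.pos_iff_nonempty.mp hn
  set vB : ℝ := (volume (ball (0 : EuclideanSpace ℝ (Fin n)) 1)).toReal with hvBdef
  have hvBne : volume (ball (0 : EuclideanSpace ℝ (Fin n)) 1) ≠ ⊤ := measure_ball_lt_top.ne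
  have hvB0 : 0 < vB :=
    ENNReal.toReal_pos (measure_ball_pos volume 0 one_pos).ne' hvBne
  have hcn : ((n : ℝ≥0∞)) * volume (ball (0 : EuclideanSpace ℝ (Fin n)) 1)
      = ENNReal.ofReal ((n : ℝ) * vB) := by
    rw [ENNReal.ofReal_mul (by positivity), ENNReal.ofReal_natCast,
      hvBdef, ENNReal.ofReal_toReal hvBne]
  set K : ℝ := 1 / ((n : ℝ) - γ) + 1 / (γ - β) with hKdef
  have hK0 : 0 < K := by
    have h1 : (0:ℝ) < (n : ℝ) - γ := by linarith
    have h2 : (0:ℝ) < γ - β := by linarith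
    positivity
  set C : ℝ := ((n : ℝ) * vB) * ((2:ℝ) ^ (γ - β) / β + 5 ^ ((n:ℝ) - β) * K) with hCdef
  have hC : 0 < C := by positivity
  refine ⟨C, hC, ?_⟩
  intro μ0 hμ0 x y hxy
  set d : ℝ := μ0 + ‖x - y‖ with hddef
  have hd0 : 0 < d := by positivity
  have hD0 : 0 < d / 2 := half_pos hd0
  -- the three functions
  set H1 : EuclideanSpace ℝ (Fin n) → ℝ≥0∞ := (closedBall y (d/2)).indicator
    (fun z => ENNReal.ofReal ((d/2) ^ (-γ)) * ENNReal.ofReal (‖z - y‖ ^ (β - (n:ℝ))))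
    with hH1def
  set H2 : EuclideanSpace ℝ (Fin n) → ℝ≥0∞ := fun z =>
    ENNReal.ofReal ((5:ℝ) ^ ((n:ℝ) - β)) *
      (ENNReal.ofReal (‖x - z‖ ^ (-γ)) * ENNReal.ofReal ((d + ‖x - z‖) ^ (β - (n:ℝ))))
    with hH2def
  have hH1m : Measurable H1 := Measurable.indicator (by fun_prop) measurableSet_closedBall
  have hH2m : Measurable H2 := by fun_prop
  -- nonnegativity and measurability of the integrand
  have hFnn : ∀ z : EuclideanSpace ℝ (Fin n),
      0 ≤ (μ0 + ‖x - z‖) ^ (-γ) * ‖z - y‖ ^ (β - (n:ℝ)) := fun z =>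
    mul_nonneg (Real.rpow_nonneg (by positivity) _) (Real.rpow_nonneg (norm_nonneg _) _)
  have hFm : Measurable (fun z : EuclideanSpace ℝ (Fin n) =>
      (μ0 + ‖x - z‖) ^ (-γ) * ‖z - y‖ ^ (β - (n:ℝ))) := by fun_prop
  -- pointwise a.e. bound
  have hae : ∀ᵐ z : EuclideanSpace ℝ (Fin n),
      ENNReal.ofReal ((μ0 + ‖x - z‖) ^ (-γ) * ‖z - y‖ ^ (β - (n:ℝ))) ≤ H1 z + H2 z := by
    filter_upwards [measure_eq_zero_iff_ae_notMem.mp (measure_singleton x)] with z hz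
    have hzx : z ≠ x := by simpa using hz
    have hFsplit : ENNReal.ofReal ((μ0 + ‖x - z‖) ^ (-γ) * ‖z - y‖ ^ (β - (n:ℝ))) =
        ENNReal.ofReal ((μ0 + ‖x - z‖) ^ (-γ)) * ENNReal.ofReal (‖z - y‖ ^ (β - (n:ℝ))) :=
      ENNReal.ofReal_mul (Real.rpow_nonneg (by positivity) _)
    by_cases hcase : ‖z - y‖ ≤ d / 2
    · have h1 : z ∈ closedBall y (d/2) := by
        simpa [mem_closedBall, dist_eq_norm] using hcase
      rw [hFsplit, hH1def]
      refine le_trans ?_ (self_le_add_right _ _)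
      rw [indicator_of_mem h1]
      refine mul_le_mul_left (ENNReal.ofReal_le_ofReal ?_) _
      apply Real.rpow_le_rpow_of_nonpos hD0 ?_ (by linarith : -γ ≤ 0)
      have h2 : ‖x - y‖ - ‖z - y‖ ≤ ‖x - z‖ := by
        simpa [sub_sub_sub_cancel_right] using norm_sub_norm_le (x - y) (z - y)
      linarith
    · push_neg at hcase
      have hxz0 : (0:ℝ) < ‖x - z‖ := by
        rw [norm_pos_iff]
        exact sub_ne_zero.mpr (hzx.symm)
      have hxyd : ‖x - y‖ ≤ d := by simp [hddef]; linarith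
      have h5 : (d + ‖x - z‖) / 5 ≤ ‖z - y‖ := by
        rcases le_or_gt ‖x - z‖ (3/2 * d) with h | h
        · linarith
        · have h2 : ‖x - z‖ - ‖x - y‖ ≤ ‖z - y‖ := by
            have h3 := norm_sub_norm_le (x - z) (x - y)
            have e : ‖(x - z) - (x - y)‖ = ‖z - y‖ := by
              rw [show (x - z) - (x - y) = y - z by abel, norm_sub_rev]
            linarith
          linarith
      have f1 : (μ0 + ‖x - z‖) ^ (-γ) ≤ ‖x - z‖ ^ (-γ) :=
        Real.rpow_le_rpow_of_nonpos hxz0 (by linarith) (by linarith)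
      have f2 : ‖z - y‖ ^ (β - (n:ℝ)) ≤ 5 ^ ((n:ℝ) - β) * (d + ‖x - z‖) ^ (β - (n:ℝ)) := by
        have h50 : (0:ℝ) < (d + ‖x - z‖) / 5 := by positivity
        calc ‖z - y‖ ^ (β - (n:ℝ))
            ≤ ((d + ‖x - z‖) / 5) ^ (β - (n:ℝ)) :=
              Real.rpow_le_rpow_of_nonpos h50 h5 (by linarith : β - (n:ℝ) ≤ 0)
          _ = 5 ^ ((n:ℝ) - β) * (d + ‖x - z‖) ^ (β - (n:ℝ)) := by
              rw [Real.div_rpow (by positivity) (by norm_num), div_eq_mul_inv,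
                ← Real.rpow_neg (by norm_num : (0:ℝ) ≤ 5), neg_sub]
              ring
      rw [hFsplit]
      refine le_trans ?_ (self_le_add_left _ _)
      calc ENNReal.ofReal ((μ0 + ‖x - z‖) ^ (-γ)) * ENNReal.ofReal (‖z - y‖ ^ (β - (n:ℝ)))
          ≤ ENNReal.ofReal (‖x - z‖ ^ (-γ)) *
            ENNReal.ofReal (5 ^ ((n:ℝ) - β) * (d + ‖x - z‖) ^ (β - (n:ℝ))) :=
            mul_le_mul' (ENNReal.ofReal_le_ofReal f1) (ENNReal.ofReal_le_ofReal f2)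
        _ = H2 z := by
            rw [hH2def, ENNReal.ofReal_mul (by positivity : (0:ℝ) ≤ (5:ℝ) ^ ((n:ℝ) - β))]
            ring
  -- compute the two integrals
  have hI1 : ∫⁻ z, H1 z = ((n : ℝ≥0∞)) * volume (ball (0 : EuclideanSpace ℝ (Fin n)) 1) *
      (ENNReal.ofReal ((d/2) ^ (-γ)) * ENNReal.ofReal ((d/2) ^ β / β)) := by
    rw [hH1def, lintegral_indicator measurableSet_closedBall,
      lintegral_const_mul _ (by fun_prop)]
    have htrans : ∫⁻ z in closedBall y (d/2), ENNReal.ofReal (‖z - y‖ ^ (β - (n:ℝ)))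
        = ∫⁻ w in closedBall (0 : EuclideanSpace ℝ (Fin n)) (d/2),
            ENNReal.ofReal (‖w‖ ^ (β - (n:ℝ))) := by
      rw [← lintegral_indicator (μ := volume) measurableSet_closedBall,
        ← lintegral_indicator (μ := volume) measurableSet_closedBall]
      have hpt : ∀ z : EuclideanSpace ℝ (Fin n),
          (closedBall y (d/2)).indicator
              (fun z => ENNReal.ofReal (‖z - y‖ ^ (β - (n:ℝ)))) z
            = (closedBall (0 : EuclideanSpace ℝ (Fin n)) (d/2)).indicator
              (fun w => ENNReal.ofReal (‖w‖ ^ (β - (n:ℝ)))) (z - y) := by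
        intro z
        by_cases hz : z ∈ closedBall y (d/2)
        · rw [indicator_of_mem hz, indicator_of_mem (by
            simpa [mem_closedBall, dist_eq_norm] using hz)]
        · rw [indicator_of_notMem hz, indicator_of_notMem (by
            simpa [mem_closedBall, dist_eq_norm] using hz)]
      rw [lintegral_congr hpt, lintegral_sub_right_eq_self _ y]
    rw [htrans, lintegral_closedBall_rpow hn hβ0 hD0, mul_left_comm]
  have hI2 : ∫⁻ z, H2 z ≤ ENNReal.ofReal ((5:ℝ) ^ ((n:ℝ) - β)) *
      (((n : ℝ≥0∞)) * volume (ball (0 : EuclideanSpace ℝ (Fin n)) 1) *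
        ENNReal.ofReal (K * d ^ (β - γ))) := by
    rw [hH2def, lintegral_const_mul _ (by fun_prop)]
    refine mul_le_mul_right ?_ _
    have htrans : ∫⁻ z, ENNReal.ofReal (‖x - z‖ ^ (-γ)) *
        ENNReal.ofReal ((d + ‖x - z‖) ^ (β - (n:ℝ)))
        = ∫⁻ w : EuclideanSpace ℝ (Fin n), ENNReal.ofReal (‖w‖ ^ (-γ)) *
            ENNReal.ofReal ((d + ‖w‖) ^ (β - (n:ℝ))) := by
      have hpt : ∀ z : EuclideanSpace ℝ (Fin n),
          ENNReal.ofReal (‖x - z‖ ^ (-γ)) * ENNReal.ofReal ((d + ‖x - z‖) ^ (β - (n:ℝ)))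
            = ENNReal.ofReal (‖z - x‖ ^ (-γ)) *
              ENNReal.ofReal ((d + ‖z - x‖) ^ (β - (n:ℝ))) := by
        intro z; rw [norm_sub_rev]
      rw [lintegral_congr hpt]
      exact lintegral_sub_right_eq_self (fun w => ENNReal.ofReal (‖w‖ ^ (-γ)) *
        ENNReal.ofReal ((d + ‖w‖) ^ (β - (n:ℝ)))) x
    rw [htrans, hKdef]
    exact lintegral_riesz_tail hγ0 hγn hβγ hd0
  -- put everything together
  have hmain : ∫⁻ z in closedBall x 1,
      ENNReal.ofReal ((μ0 + ‖x - z‖) ^ (-γ) * ‖z - y‖ ^ (β - (n:ℝ)))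
      ≤ ENNReal.ofReal (C * d ^ (β - γ)) := by
    calc ∫⁻ z in closedBall x 1,
        ENNReal.ofReal ((μ0 + ‖x - z‖) ^ (-γ) * ‖z - y‖ ^ (β - (n:ℝ)))
        ≤ ∫⁻ z in closedBall x 1, (H1 z + H2 z) :=
          lintegral_mono_ae (ae_restrict_of_ae hae)
      _ ≤ ∫⁻ z, (H1 z + H2 z) := setLIntegral_le_lintegral _ _
      _ = (∫⁻ z, H1 z) + ∫⁻ z, H2 z := lintegral_add_left hH1m _
      _ ≤ ENNReal.ofReal (C * d ^ (β - γ)) := by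
          rw [hI1]
          refine le_trans (add_le_add_right hI2 _) ?_
          have hpow : (d/2) ^ (-γ) * ((d/2) ^ β / β) = (2:ℝ) ^ (γ - β) / β * d ^ (β - γ) := by
            rw [← mul_div_assoc, ← Real.rpow_add hD0, Real.div_rpow hd0.le (by norm_num),
              show -γ + β = β - γ by ring,
              show (2:ℝ) ^ (γ - β) = ((2:ℝ) ^ (β - γ))⁻¹ by
                rw [← Real.rpow_neg (by norm_num : (0:ℝ) ≤ 2), neg_sub]]
            ring
          have e1 : ENNReal.ofReal ((d / 2) ^ (-γ)) * ENNReal.ofReal ((d / 2) ^ β / β)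
              = ENNReal.ofReal (2 ^ (γ - β) / β * d ^ (β - γ)) := by
            rw [← ENNReal.ofReal_mul (by positivity), hpow]
          have e2 : ENNReal.ofReal ((5:ℝ) ^ ((n:ℝ) - β)) * (ENNReal.ofReal ((n:ℝ) * vB) *
              ENNReal.ofReal (K * d ^ (β - γ)))
              = ENNReal.ofReal ((5:ℝ) ^ ((n:ℝ) - β) * ((n:ℝ) * vB * (K * d ^ (β - γ)))) := by
            rw [← ENNReal.ofReal_mul (by positivity : (0:ℝ) ≤ (n:ℝ) * vB),
              ← ENNReal.ofReal_mul (by positivity : (0:ℝ) ≤ (5:ℝ) ^ ((n:ℝ) - β))]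
          rw [hcn, e1, e2, ← ENNReal.ofReal_mul (by positivity : (0:ℝ) ≤ (n:ℝ) * vB),
            ← ENNReal.ofReal_add (by positivity) (by positivity)]
          apply ENNReal.ofReal_le_ofReal
          rw [hCdef]
          ring_nf
          exact le_refl _
  have heq : ∫ z in closedBall x 1,
      (μ0 + ‖x - z‖) ^ (-γ) * ‖z - y‖ ^ (β - (n:ℝ))
      = (∫⁻ z in closedBall x 1,
          ENNReal.ofReal ((μ0 + ‖x - z‖) ^ (-γ) * ‖z - y‖ ^ (β - (n:ℝ)))).toReal :=
    integral_eq_lintegral_of_nonneg_ae (ae_of_all _ fun z => hFnn z)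
      hFm.aestronglyMeasurable.restrict
  rw [heq]
  exact ENNReal.toReal_le_of_le_ofReal
    (mul_nonneg hC.le (Real.rpow_nonneg hd0.le _)) hmain
end
end
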